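/- arXiv:1312.3708 — 4 statements merged into one kernel-verified Lean document; each statement's English description precedes it below -/
import Mathlib

section
/- Let λ and μ be m-multipartitions of n, let s be a standard λ-tableau and t a standard μ-tableau. If res_s(k) = res_t(k) in ℚ(q_1,…,q_m) for all k = 1,…,n, then λ = μ and s = t. -/
open scoped BigOperators

/-- A partition, encoded by its sequence of parts: `part k` is the `(k+1)`-st part
`λ_{k+1}`; so the (weakly decreasing, eventually zero) sequence `λ_1, λ_2, …`
is `part 0, part 1, …`. -/
structure Ptn : Type where
  part : ℕ → ℕ
  antitone : Antitone part
  finite_support : ∃ N, ∀ k, N ≤ k → part k = 0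

namespace Ptn

/-- The part `λ_i` for `i ≥ 1` (1-indexed). -/
def row (l : Ptn) (i : ℕ) : ℕ := l.part (i - 1)

/-- The diagram of a partition, as the set of 1-indexed nodes `(i, j)` with
`1 ≤ j ≤ λ_i`. -/
def cells (l : Ptn) : Set (ℕ × ℕ) := {x | 1 ≤ x.1 ∧ 1 ≤ x.2 ∧ x.2 ≤ l.row x.1}

/-- The conjugate partition: `conj l j = λ̂_j = #{i ≥ 1 | λ_i ≥ j}` (for `j ≥ 1`). -/
noncomputable def conj (l : Ptn) (j : ℕ) : ℕ := Set.ncard {k : ℕ | j ≤ l.part k}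

/-- A node of `λ` is removable if deleting it leaves the diagram of a partition. -/
def removable (l : Ptn) : Set (ℕ × ℕ) :=
  {x | x ∈ l.cells ∧ ∃ m : Ptn, m.cells = l.cells \ {x}}

/-- A node not in `λ` is addable if adjoining it gives the diagram of a partition. -/
def addable (l : Ptn) : Set (ℕ × ℕ) :=
  {x | x ∉ l.cells ∧ ∃ m : Ptn, m.cells = l.cells ∪ {x}}

/-- The generalized hook length `h^{λ,μ}_{i,j} = λ_i − i + μ̂_j − j + 1` (an integer). -/
noncomputable def ghook (l mu : Ptn) (x : ℕ × ℕ) : ℤ :=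
  (l.row x.1 : ℤ) - (x.1 : ℤ) + (mu.conj x.2 : ℤ) - (x.2 : ℤ) + 1

/-- The hook length `h^λ_{i,j} = λ_i − i + λ̂_j − j + 1`. -/
noncomputable def hook (l : Ptn) (x : ℕ × ℕ) : ℤ := l.ghook l x

/-- The residue of the node `(a, b)`: `res (a, b) = b − a`. -/
def res (x : ℕ × ℕ) : ℤ := (x.2 : ℤ) - (x.1 : ℤ)

end Ptn

/-- An `m`-multipartition: an `m`-tuple of partitions. -/
def MPtn (m : ℕ) : Type := Fin m → Ptn

namespace MPtn

variable {m : ℕ}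

/-- The diagram: nodes `(i, j, c)` with `(i, j)` in the diagram of the `c`-th component. -/
def cells (l : MPtn m) : Set (ℕ × ℕ × Fin m) := {x | (x.1, x.2.1) ∈ (l x.2.2).cells}

/-- The number of nodes; `l.size = n` says `l` is an `m`-multipartition of `n`. -/
noncomputable def size (l : MPtn m) : ℕ := l.cells.ncard

/-- Removable nodes, defined componentwise. -/
def removable (l : MPtn m) : Set (ℕ × ℕ × Fin m) :=
  {x | (x.1, x.2.1) ∈ (l x.2.2).removable}

/-- Addable nodes, defined componentwise. -/
def addable (l : MPtn m) : Set (ℕ × ℕ × Fin m) :=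
  {x | (x.1, x.2.1) ∈ (l x.2.2).addable}

end MPtn

/-- A `λ`-tableau with entries `1, …, n`, encoded by the map sending `k : Fin n`
(representing the entry `k + 1`) to the node containing that entry; being a tableau
means this is a bijection from the entries onto the diagram of `λ`. -/
def IsTableau {m : ℕ} (l : MPtn m) (n : ℕ) (T : Fin n → ℕ × ℕ × Fin m) : Prop :=
  Function.Injective T ∧ Set.range T = l.cells

/-- A tableau is standard if, within each component, entries increase along rows
and down columns. -/
def IsStandard {m n : ℕ} (T : Fin n → ℕ × ℕ × Fin m) : Prop :=
  ∀ k l : Fin n, (T k).2.2 = (T l).2.2 →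
    (((T k).1 = (T l).1 ∧ (T k).2.1 < (T l).2.1) ∨
      ((T k).2.1 = (T l).2.1 ∧ (T k).1 < (T l).1)) → k < l

/-- The field `F = ℚ(q_1, …, q_m)` of rational functions in indeterminates `q_1, …, q_m`. -/
abbrev FF (m : ℕ) : Type := FractionRing (MvPolynomial (Fin m) ℚ)

/-- The indeterminate `q_c` as an element of `ℚ(q_1, …, q_m)`. -/
noncomputable def qF {m : ℕ} (c : Fin m) : FF m :=
  algebraMap (MvPolynomial (Fin m) ℚ) (FF m) (MvPolynomial.X c)

/-- The residue `res (a, b, c) = b − a + q_c ∈ ℚ(q_1, …, q_m)` of a node `(a, b, c)`. -/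
noncomputable def resF {m : ℕ} (x : ℕ × ℕ × Fin m) : FF m :=
  (x.2.1 : FF m) - (x.1 : FF m) + qF x.2.2

lemma qF_add_inj {m : ℕ} {d e : ℤ} {c c' : Fin m}
    (h : (d : FF m) + qF c = (e : FF m) + qF c') : d = e ∧ c = c' := by
  have hinj := IsFractionRing.injective (MvPolynomial (Fin m) ℚ) (FF m)
  have h2 : ((d : MvPolynomial (Fin m) ℚ) + MvPolynomial.X c)
      = ((e : MvPolynomial (Fin m) ℚ) + MvPolynomial.X c') := by
    apply hinj
    simpa [qF, map_add, map_intCast] using h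
  have hc : c = c' := by
    by_contra hne
    have hss : Finsupp.single c' (1:ℕ) ≠ Finsupp.single c 1 := by
      intro hs
      exact hne ((Finsupp.single_left_injective one_ne_zero) hs).symm
    have h3 := congrArg (MvPolynomial.coeff (Finsupp.single c 1)) h2
    rw [← map_intCast (MvPolynomial.C : ℚ →+* MvPolynomial (Fin m) ℚ) d,
      ← map_intCast (MvPolynomial.C : ℚ →+* MvPolynomial (Fin m) ℚ) e,
      MvPolynomial.coeff_add, MvPolynomial.coeff_add,
      MvPolynomial.coeff_C, MvPolynomial.coeff_C,
      MvPolynomial.coeff_X', MvPolynomial.coeff_X'] at h3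
    have h0 : ¬ ((0 : Fin m →₀ ℕ) = Finsupp.single c 1) := by
      simp [eq_comm]
    rw [if_neg h0, if_neg h0, if_pos rfl, if_neg hss] at h3
    simp at h3
  subst hc
  have h4 : (d : MvPolynomial (Fin m) ℚ) = e := add_right_cancel h2
  exact ⟨by exact_mod_cast h4, rfl⟩

lemma Ptn.row_anti (l : Ptn) {i j : ℕ} (h : i ≤ j) : l.row j ≤ l.row i :=
  l.antitone (Nat.sub_le_sub_right h 1)

lemma mem_cells_of_tableau {m n : ℕ} {lam : MPtn m} {S : Fin n → ℕ × ℕ × Fin m}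
    (hS : IsTableau lam n S) (k : Fin n) : S k ∈ lam.cells := by
  rw [← hS.2]; exact ⟨k, rfl⟩

lemma rect {m n : ℕ} {lam : MPtn m} {S : Fin n → ℕ × ℕ × Fin m}
    (hS : IsTableau lam n S) (hstd : IsStandard S) {l : Fin n} {i j i' j' : ℕ} {c : Fin m}
    (hl : S l = (i, j, c)) (hi' : 1 ≤ i') (hj' : 1 ≤ j') (hii : i' ≤ i) (hjj : j' ≤ j)
    (hne : ¬ (i' = i ∧ j' = j)) : ∃ l' : Fin n, l' < l ∧ S l' = (i', j', c) := by
  have hmem := mem_cells_of_tableau hS l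
  rw [hl] at hmem
  obtain ⟨hi1, hj1, hjrow⟩ : 1 ≤ i ∧ 1 ≤ j ∧ j ≤ (lam c).row i := hmem
  -- middle node (i', j, c)
  have hmid : (i', j, c) ∈ lam.cells :=
    ⟨hi', hj1, le_trans hjrow (Ptn.row_anti _ hii)⟩
  rw [← hS.2] at hmid
  obtain ⟨p, hp⟩ := hmid
  have hpl : p ≤ l := by
    rcases eq_or_lt_of_le hii with hie | hie
    · subst hie
      exact le_of_eq (hS.1 (hp.trans hl.symm))
    · refine le_of_lt (hstd p l ?_ ?_)
      · rw [hp, hl]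
      · right; rw [hp, hl]; exact ⟨rfl, hie⟩
  -- target node (i', j', c)
  have htgt : (i', j', c) ∈ lam.cells :=
    ⟨hi', hj', le_trans hjj (le_trans hjrow (Ptn.row_anti _ hii))⟩
  rw [← hS.2] at htgt
  obtain ⟨q, hq⟩ := htgt
  refine ⟨q, ?_, hq⟩
  rcases eq_or_lt_of_le hjj with hje | hje
  · -- j' = j
    subst hje
    have hqp : q = p := hS.1 (hq.trans hp.symm)
    subst hqp
    rcases lt_or_eq_of_le hpl with h' | h'
    · exact h'
    · exfalso
      subst h'
      have hqq : ((i, j', c) : ℕ × ℕ × Fin m) = (i', j', c) := hl.symm.trans hq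
      exact hne ⟨(congrArg Prod.fst hqq).symm, rfl⟩
  · have hqp : q < p := by
      refine hstd q p ?_ ?_
      · rw [hq, hp]
      · left; rw [hq, hp]; exact ⟨rfl, hje⟩
    exact lt_of_lt_of_le hqp hpl

lemma key {m n : ℕ} {lam mu : MPtn m} {S T : Fin n → ℕ × ℕ × Fin m}
    (hS : IsTableau lam n S) (hSstd : IsStandard S)
    (hT : IsTableau mu n T) (hTstd : IsStandard T)
    (k : Fin n) (IH : ∀ l, l < k → S l = T l)
    (hc : (S k).2.2 = (T k).2.2)
    (hd : ((S k).2.1 : ℤ) - ((S k).1 : ℤ) = ((T k).2.1 : ℤ) - ((T k).1 : ℤ)) :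
    ¬ (S k).1 < (T k).1 := by
  intro hlt
  rcases hSk : S k with ⟨a, b, c⟩
  rcases hTk : T k with ⟨a', b', c''⟩
  rw [hSk, hTk] at hc hd hlt
  have hc' : c = c'' := hc
  subst hc'
  have hlt' : a < a' := hlt
  have hd' : (b : ℤ) - (a : ℤ) = (b' : ℤ) - (a' : ℤ) := hd
  have hmemS := mem_cells_of_tableau hS k
  rw [hSk] at hmemS
  obtain ⟨ha1, hb1, hbrow⟩ : 1 ≤ a ∧ 1 ≤ b ∧ b ≤ (lam c).row a := hmemS
  have hmemT := mem_cells_of_tableau hT k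
  rw [hTk] at hmemT
  obtain ⟨ha1', hb1', hbrow'⟩ : 1 ≤ a' ∧ 1 ≤ b' ∧ b' ≤ (mu c).row a' := hmemT
  have hbb : b < b' := by omega
  -- the node just left of T k
  have hy : (a', b' - 1, c) ∈ mu.cells := by
    refine ⟨ha1', ?_, ?_⟩
    · show 1 ≤ b' - 1; omega
    · show b' - 1 ≤ (mu c).row a'; omega
  rw [← hT.2] at hy
  obtain ⟨l, hl⟩ := hy
  have hlk : l < k := by
    refine hTstd l k ?_ ?_
    · rw [hl, hTk]
    · left; rw [hl, hTk]
      exact ⟨rfl, show b' - 1 < b' by omega⟩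
  have hSl : S l = (a', b' - 1, c) := (IH l hlk).trans hl
  obtain ⟨q, hql, hq⟩ := rect hS hSstd hSl ha1 hb1 (le_of_lt hlt') (by omega)
    (by rintro ⟨rfl, -⟩; omega)
  have hqk : q = k := hS.1 (hq.trans hSk.symm)
  subst hqk
  exact absurd (lt_trans hql hlk) (lt_irrefl _)

lemma Ptn.eq_of_cells_eq {l l' : Ptn} (h : l.cells = l'.cells) : l = l' := by
  have hpart : ∀ k, l.part k = l'.part k := by
    intro k
    have hiff : ∀ j, 1 ≤ j → (j ≤ l.part k ↔ j ≤ l'.part k) := by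
      intro j hj
      have h2 := Set.ext_iff.mp h (k + 1, j)
      simpa [Ptn.cells, Ptn.row, hj] using h2
    have h1 := hiff (l.part k)
    have h2 := hiff (l'.part k)
    omega
  obtain ⟨p, ha, hf⟩ := l
  obtain ⟨p', ha', hf'⟩ := l'
  obtain rfl : p = p' := funext hpart
  rfl

lemma resF_inj {m : ℕ} {x y : ℕ × ℕ × Fin m} (h : resF x = resF y) :
    x.2.2 = y.2.2 ∧ ((x.2.1 : ℤ) - (x.1 : ℤ) = (y.2.1 : ℤ) - (y.1 : ℤ)) := by
  have h' : (((x.2.1 : ℤ) - (x.1 : ℤ) : ℤ) : FF m) + qF x.2.2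
      = (((y.2.1 : ℤ) - (y.1 : ℤ) : ℤ) : FF m) + qF y.2.2 := by
    push_cast
    simpa [resF] using h
  obtain ⟨hd, hc⟩ := qF_add_inj h'
  exact ⟨hc, hd⟩

theorem statement0 {m n : ℕ} (lam mu : MPtn m)
    (hlam : lam.size = n) (hmu : mu.size = n)
    (S T : Fin n → ℕ × ℕ × Fin m)
    (hS : IsTableau lam n S) (hSstd : IsStandard S)
    (hT : IsTableau mu n T) (hTstd : IsStandard T)
    (hres : ∀ k : Fin n, resF (S k) = resF (T k)) :
    lam = mu ∧ S = T := by
  have hres' := fun k => resF_inj (hres k)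
  have main : ∀ N : ℕ, ∀ k : Fin n, (k : ℕ) < N → S k = T k := by
    intro N
    induction N with
    | zero => intro k hk; exact absurd hk (Nat.not_lt_zero _)
    | succ N ih =>
      intro k hk
      by_cases h : (k : ℕ) < N
      · exact ih k h
      · have hkN : (k : ℕ) = N := by omega
        have IH : ∀ l, l < k → S l = T l := by
          intro l hl
          exact ih l (by omega)
        have h1 := key hS hSstd hT hTstd k IH (hres' k).1 (hres' k).2
        have h2 := key hT hTstd hS hSstd k (fun l hl => (IH l hl).symm)
          (hres' k).1.symm (hres' k).2.symm
        have ha : (S k).1 = (T k).1 := by omega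
        have hb : (S k).2.1 = (T k).2.1 := by
          have := (hres' k).2; omega
        have hc := (hres' k).1
        rcases hSk : S k with ⟨a, b, c⟩
        rcases hTk : T k with ⟨a', b', c'⟩
        rw [hSk, hTk] at ha hb hc
        simp only [] at ha hb hc
        rw [ha, hb, hc]
  have hST : S = T := funext fun k => main n k k.isLt
  have hcells : lam.cells = mu.cells := by
    rw [← hS.2, ← hT.2, hST]
  have hlm : lam = mu := by
    funext c
    apply Ptn.eq_of_cells_eq
    ext ⟨i, j⟩
    have := Set.ext_iff.mp hcells (i, j, c)
    simpa [MPtn.cells] using this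
  exact ⟨hlm, hST⟩
end

section
/- Let λ and μ be partitions, let α = (ı,ȷ) be a removable node of λ, and set ν = λ ∖ {α}. Define Θ_{λ,μ}(z) := ∏_{(i,j)∈μ} (h^{λ,μ}_{i,j} + z)^{-1} · ∏_{(i,j)∈λ} (h^{μ,λ}_{i,j} − z)^{-1} as an element of the field ℚ(z) of rational functions in one indeterminate z (and Θ_{ν,μ}(z) analogously with λ replaced by ν). Then Θ_{λ,μ}(z) / Θ_{ν,μ}(z) = ∏_{β∈R(μ)} (res(β) − res(α) − z) · ∏_{γ∈A(μ)} (res(γ) − res(α) − z)^{-1}. -/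
open scoped BigOperators

/-- `Θ_{λ,μ}(z) = ∏_{(i,j)∈μ} (h^{λ,μ}_{i,j} + z)⁻¹ · ∏_{(i,j)∈λ} (h^{μ,λ}_{i,j} − z)⁻¹`,
an element of the field `ℚ(z)` of rational functions in one indeterminate `z = RatFunc.X`. -/
noncomputable def Theta2 (lam mu : Ptn) : RatFunc ℚ :=
  (∏ᶠ x ∈ mu.cells, ((Ptn.ghook lam mu x : RatFunc ℚ) + RatFunc.X)⁻¹) *
    ∏ᶠ x ∈ lam.cells, ((Ptn.ghook mu lam x : RatFunc ℚ) - RatFunc.X)⁻¹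

namespace PtnAux
open Ptn

lemma nat_eq_of_le_iff {a b : ℕ} (h : ∀ j, 1 ≤ j → (j ≤ a ↔ j ≤ b)) : a = b := by
  rcases Nat.eq_zero_or_pos a with ha | ha
  · rcases Nat.eq_zero_or_pos b with hb | hb
    · omega
    · have := (h b hb).mpr le_rfl; omega
  · rcases Nat.eq_zero_or_pos b with hb | hb
    · have := (h a ha).mp le_rfl; omega
    · have h1 := (h a ha).mp le_rfl
      have h2 := (h b hb).mpr le_rfl
      omega

lemma row_antitone (l : Ptn) : Antitone l.row :=
  fun _ _ hab => l.antitone (Nat.sub_le_sub_right hab 1)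

lemma mem_cells {l : Ptn} {x : ℕ × ℕ} :
    x ∈ l.cells ↔ 1 ≤ x.1 ∧ 1 ≤ x.2 ∧ x.2 ≤ l.row x.1 := Iff.rfl

lemma mem_iff_lt_ncard {S : Set ℕ} (hfin : S.Finite)
    (hdc : ∀ a b : ℕ, a ≤ b → b ∈ S → a ∈ S) (k : ℕ) : k ∈ S ↔ k < S.ncard := by
  constructor
  · intro hk
    have hsub : Set.Iic k ⊆ S := fun a ha => hdc a k ha hk
    have hle : (Set.Iic k).ncard ≤ S.ncard := Set.ncard_le_ncard hsub hfin
    have hIic : (Set.Iic k).ncard = k + 1 := by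
      rw [← Finset.coe_Iic, Set.ncard_coe_finset, Nat.card_Iic]
    omega
  · intro hk
    by_contra hkS
    have hsub : S ⊆ Set.Iio k := by
      intro m hm
      rw [Set.mem_Iio]
      by_contra hmk
      exact hkS (hdc k m (by omega) hm)
    have hle : S.ncard ≤ (Set.Iio k).ncard := Set.ncard_le_ncard hsub (Set.finite_Iio k)
    have hIio : (Set.Iio k).ncard = k := by
      rw [← Finset.coe_Iio, Set.ncard_coe_finset, Nat.card_Iio]
    omega

lemma le_part_iff (l : Ptn) {j : ℕ} (hj : 1 ≤ j) (k : ℕ) :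
    j ≤ l.part k ↔ k < l.conj j := by
  have hfin : {k : ℕ | j ≤ l.part k}.Finite := by
    obtain ⟨N, hN⟩ := l.finite_support
    apply Set.Finite.subset (Set.finite_Iio N)
    intro k hk
    simp only [Set.mem_setOf_eq] at hk
    simp only [Set.mem_Iio]
    by_contra hc
    have := hN k (by omega)
    omega
  exact mem_iff_lt_ncard hfin (fun a b hab hb => le_trans hb (l.antitone hab)) k

lemma le_row_iff (l : Ptn) {i j : ℕ} (hi : 1 ≤ i) (hj : 1 ≤ j) :
    j ≤ l.row i ↔ i ≤ l.conj j := by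
  have h := le_part_iff l hj (i - 1)
  unfold Ptn.row
  omega

lemma remove_spec {l m : Ptn} {x : ℕ × ℕ} (hx : x ∈ l.cells)
    (h : m.cells = l.cells \ {x}) :
    x.2 = l.row x.1 ∧ m.row x.1 = x.2 - 1 ∧
      (∀ i, 1 ≤ i → i ≠ x.1 → m.row i = l.row i) ∧ l.row (x.1 + 1) < x.2 := by
  obtain ⟨a, b⟩ := x
  obtain ⟨hx1, hx2, hx3⟩ := hx
  replace hx1 : 1 ≤ a := hx1
  replace hx2 : 1 ≤ b := hx2
  replace hx3 : b ≤ l.row a := hx3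
  have hmem : ∀ i j : ℕ, 1 ≤ i → 1 ≤ j →
      ((j ≤ m.row i) ↔ (j ≤ l.row i ∧ ¬(i = a ∧ j = b))) := by
    intro i j hi hj
    constructor
    · intro hjm
      have hm : (i, j) ∈ m.cells := ⟨hi, hj, hjm⟩
      rw [h, Set.mem_diff, Set.mem_singleton_iff, Prod.mk.injEq] at hm
      exact ⟨hm.1.2.2, hm.2⟩
    · rintro ⟨hjl, hne⟩
      have hm : (i, j) ∈ m.cells := by
        rw [h, Set.mem_diff, Set.mem_singleton_iff, Prod.mk.injEq]
        exact ⟨⟨hi, hj, hjl⟩, hne⟩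
      exact hm.2.2
  have hcorner : b = l.row a := by
    by_contra hne
    have h1 : b + 1 ≤ m.row a := by
      rw [hmem a (b + 1) hx1 (by omega)]
      omega
    have h2 : ¬ (b ≤ m.row a) := by
      rw [hmem a b hx1 hx2]
      omega
    omega
  have hrowx : m.row a = b - 1 := by
    apply nat_eq_of_le_iff
    intro j hj
    rw [hmem a j hx1 hj]
    omega
  have hother : ∀ i, 1 ≤ i → i ≠ a → m.row i = l.row i := by
    intro i hi hine
    apply nat_eq_of_le_iff
    intro j hj
    rw [hmem i j hi hj]
    omega
  refine ⟨hcorner, hrowx, hother, ?_⟩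
  have h1 : m.row (a + 1) = l.row (a + 1) := hother _ (by omega) (by omega)
  have h2 : m.row (a + 1) ≤ m.row a := row_antitone m (by omega)
  show l.row (a + 1) < b
  omega

lemma add_spec {l m : Ptn} {x : ℕ × ℕ} (hx : x ∉ l.cells)
    (h : m.cells = l.cells ∪ {x}) :
    1 ≤ x.1 ∧ 1 ≤ x.2 ∧ x.2 = l.row x.1 + 1 ∧
      (x.1 = 1 ∨ l.row x.1 < l.row (x.1 - 1)) ∧
      (∀ i, 1 ≤ i → i ≠ x.1 → m.row i = l.row i) ∧ m.row x.1 = x.2 := by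
  obtain ⟨a, b⟩ := x
  have hxm : (a, b) ∈ m.cells := by rw [h]; right; rfl
  obtain ⟨hx1, hx2, hx3⟩ := hxm
  replace hx1 : 1 ≤ a := hx1
  replace hx2 : 1 ≤ b := hx2
  replace hx3 : b ≤ m.row a := hx3
  have hmem : ∀ i j : ℕ, 1 ≤ i → 1 ≤ j →
      ((j ≤ m.row i) ↔ (j ≤ l.row i ∨ (i = a ∧ j = b))) := by
    intro i j hi hj
    constructor
    · intro hjm
      have hm : (i, j) ∈ m.cells := ⟨hi, hj, hjm⟩
      rw [h, Set.mem_union, Set.mem_singleton_iff, Prod.mk.injEq] at hm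
      rcases hm with hm | hm
      · exact Or.inl hm.2.2
      · exact Or.inr hm
    · intro hor
      have hm : (i, j) ∈ m.cells := by
        rw [h, Set.mem_union, Set.mem_singleton_iff, Prod.mk.injEq]
        rcases hor with hor | hor
        · exact Or.inl ⟨hi, hj, hor⟩
        · exact Or.inr hor
      exact hm.2.2
  have hnotin : l.row a < b := by
    by_contra hc
    exact hx ⟨hx1, hx2, show b ≤ l.row a by omega⟩
  have hcorner : b = l.row a + 1 := by
    by_contra hne
    have h1 : l.row a + 1 ≤ m.row a := le_trans (by omega) hx3
    rw [hmem a (l.row a + 1) hx1 (by omega)] at h1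
    omega
  have hrowx : m.row a = b := by
    apply nat_eq_of_le_iff
    intro j hj
    rw [hmem a j hx1 hj]
    omega
  have hother : ∀ i, 1 ≤ i → i ≠ a → m.row i = l.row i := by
    intro i hi hine
    apply nat_eq_of_le_iff
    intro j hj
    rw [hmem i j hi hj]
    omega
  refine ⟨hx1, hx2, hcorner, ?_, hother, hrowx⟩
  show a = 1 ∨ l.row a < l.row (a - 1)
  rcases Nat.eq_or_lt_of_le hx1 with h1 | h1
  · left; omega
  · right
    have hrowother : m.row (a - 1) = l.row (a - 1) := hother _ (by omega) (by omega)
    have h2 : m.row a ≤ m.row (a - 1) := row_antitone m (by omega)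
    omega


lemma removable_iff (l : Ptn) (x : ℕ × ℕ) :
    x ∈ l.removable ↔
      1 ≤ x.1 ∧ 1 ≤ x.2 ∧ x.2 = l.row x.1 ∧ l.row (x.1 + 1) < l.row x.1 := by
  obtain ⟨a, b⟩ := x
  constructor
  · rintro ⟨hc, m, hm⟩
    obtain ⟨s1, s2, s3, s4⟩ := remove_spec hc hm
    replace s1 : b = l.row a := s1
    replace s4 : l.row (a + 1) < b := s4
    refine ⟨hc.1, hc.2.1, s1, ?_⟩
    show l.row (a + 1) < l.row a
    omega
  · rintro ⟨h1, h2, h3, h4⟩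
    replace h1 : 1 ≤ a := h1
    replace h2 : 1 ≤ b := h2
    replace h3 : b = l.row a := h3
    replace h4 : l.row (a + 1) < l.row a := h4
    have hkey : l.part a < l.part (a - 1) := by
      have e1 : l.row (a + 1) = l.part a := by show l.part (a + 1 - 1) = l.part a; norm_num
      have e2 : l.row a = l.part (a - 1) := rfl
      omega
    refine ⟨⟨h1, h2, le_of_eq h3⟩, ?_⟩
    refine ⟨⟨fun k => if k = a - 1 then l.part k - 1 else l.part k, ?_, ?_⟩, ?_⟩
    · intro u v huv
      have hl := l.antitone huv
      show (if v = a - 1 then l.part v - 1 else l.part v) ≤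
        (if u = a - 1 then l.part u - 1 else l.part u)
      rcases eq_or_ne u (a - 1) with hu | hu <;> rcases eq_or_ne v (a - 1) with hv | hv
      · rw [if_pos hu, if_pos hv]
        have hpp : l.part u = l.part v := by rw [hu, hv]
        omega
      · rw [if_pos hu, if_neg hv]
        have hva := l.antitone (show a ≤ v by omega)
        have hpu : l.part u = l.part (a - 1) := by rw [hu]
        omega
      · rw [if_neg hu, if_pos hv]
        omega
      · rw [if_neg hu, if_neg hv]; exact hl
    · obtain ⟨N, hN⟩ := l.finite_support
      refine ⟨N, fun k hk => ?_⟩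
      have := hN k hk
      show (if k = a - 1 then l.part k - 1 else l.part k) = 0
      split_ifs <;> omega
    · ext ⟨u, v⟩
      simp only [Ptn.cells, Set.mem_diff, Set.mem_singleton_iff, Set.mem_setOf_eq,
        Prod.mk.injEq]
      show (1 ≤ u ∧ 1 ≤ v ∧ v ≤ (if u - 1 = a - 1 then l.part (u - 1) - 1 else l.part (u - 1)))
        ↔ (1 ≤ u ∧ 1 ≤ v ∧ v ≤ l.row u) ∧ ¬(u = a ∧ v = b)
      have hrow : l.row u = l.part (u - 1) := rfl
      have hrowa : l.row a = l.part (a - 1) := rfl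
      rcases eq_or_ne (u - 1) (a - 1) with hu | hu
      · rw [if_pos hu]
        have hpp : l.part (u - 1) = l.part (a - 1) := by rw [hu]
        omega
      · rw [if_neg hu]
        omega

lemma addable_iff (l : Ptn) (x : ℕ × ℕ) :
    x ∈ l.addable ↔
      1 ≤ x.1 ∧ x.2 = l.row x.1 + 1 ∧ (x.1 = 1 ∨ l.row x.1 < l.row (x.1 - 1)) := by
  obtain ⟨a, b⟩ := x
  constructor
  · rintro ⟨hc, m, hm⟩
    obtain ⟨s1, s2, s3, s4, -⟩ := add_spec hc hm
    exact ⟨s1, s3, s4⟩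
  · rintro ⟨h1, h3, h4⟩
    replace h1 : 1 ≤ a := h1
    replace h3 : b = l.row a + 1 := h3
    replace h4 : a = 1 ∨ l.row a < l.row (a - 1) := h4
    have hrowa : l.row a = l.part (a - 1) := rfl
    have hkey : a = 1 ∨ l.part (a - 1) < l.part (a - 2) := by
      rcases h4 with h4 | h4
      · exact Or.inl h4
      · right
        have e2 : l.row (a - 1) = l.part (a - 2) := by unfold Ptn.row; congr 1
        omega
    refine ⟨fun hc => ?_, ?_⟩
    · have := hc.2.2
      replace this : b ≤ l.row a := this
      omega
    refine ⟨⟨fun k => if k = a - 1 then l.part k + 1 else l.part k, ?_, ?_⟩, ?_⟩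
    · intro u v huv
      have hl := l.antitone huv
      show (if v = a - 1 then l.part v + 1 else l.part v) ≤
        (if u = a - 1 then l.part u + 1 else l.part u)
      rcases eq_or_ne u (a - 1) with hu | hu <;> rcases eq_or_ne v (a - 1) with hv | hv
      · rw [if_pos hu, if_pos hv]
        have hpp : l.part u = l.part v := by rw [hu, hv]
        omega
      · rw [if_pos hu, if_neg hv]
        omega
      · rw [if_neg hu, if_pos hv]
        have ha2 : 2 ≤ a := by omega
        have hua := l.antitone (show u ≤ a - 2 by omega)
        have hpv : l.part v = l.part (a - 1) := by rw [hv]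
        omega
      · rw [if_neg hu, if_neg hv]; exact hl
    · obtain ⟨N, hN⟩ := l.finite_support
      refine ⟨max N (a + 1), fun k hk => ?_⟩
      have := hN k (by omega)
      show (if k = a - 1 then l.part k + 1 else l.part k) = 0
      rw [if_neg (by omega)]
      exact this
    · ext ⟨u, v⟩
      simp only [Ptn.cells, Set.mem_union, Set.mem_singleton_iff, Set.mem_setOf_eq,
        Prod.mk.injEq]
      show (1 ≤ u ∧ 1 ≤ v ∧ v ≤ (if u - 1 = a - 1 then l.part (u - 1) + 1 else l.part (u - 1)))
        ↔ (1 ≤ u ∧ 1 ≤ v ∧ v ≤ l.row u) ∨ (u = a ∧ v = b)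
      have hrow : l.row u = l.part (u - 1) := rfl
      rcases eq_or_ne (u - 1) (a - 1) with hu | hu
      · rw [if_pos hu]
        have hpp : l.part (u - 1) = l.part (a - 1) := by rw [hu]
        omega
      · rw [if_neg hu]
        omega

lemma removable_eq (l : Ptn) :
    l.removable = (fun i => (i, l.row i)) '' {i : ℕ | 1 ≤ i ∧ l.row (i + 1) < l.row i} := by
  ext ⟨u, v⟩
  rw [removable_iff]
  simp only [Set.mem_image, Set.mem_setOf_eq, Prod.mk.injEq]
  constructor
  · rintro ⟨h1, h2, h3, h4⟩
    exact ⟨u, ⟨h1, by omega⟩, rfl, h3.symm⟩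
  · rintro ⟨i, ⟨hi1, hi2⟩, rfl, rfl⟩
    exact ⟨hi1, by omega, rfl, by omega⟩

lemma addable_eq (l : Ptn) :
    l.addable = (fun i => (i, l.row i + 1)) ''
      {i : ℕ | 1 ≤ i ∧ (i = 1 ∨ l.row i < l.row (i - 1))} := by
  ext ⟨u, v⟩
  rw [addable_iff]
  simp only [Set.mem_image, Set.mem_setOf_eq, Prod.mk.injEq]
  constructor
  · rintro ⟨h1, h3, h4⟩
    exact ⟨u, ⟨h1, h4⟩, rfl, h3.symm⟩
  · rintro ⟨i, ⟨hi1, hi2⟩, rfl, rfl⟩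
    exact ⟨hi1, rfl, hi2⟩


section Kalg

noncomputable abbrev K := RatFunc ℚ

lemma cast_sub_X_ne_zero (n : ℤ) : ((n : K) - RatFunc.X) ≠ 0 := by
  have h : ((n : K) - RatFunc.X) =
      algebraMap (Polynomial ℚ) (RatFunc ℚ) (Polynomial.C (n : ℚ) - Polynomial.X) := by
    rw [map_sub, RatFunc.algebraMap_X, RatFunc.algebraMap_C,
      map_intCast (RatFunc.C : ℚ →+* RatFunc ℚ) n]
  rw [h]
  apply RatFunc.algebraMap_ne_zero
  intro hc
  have e0 := congrArg (Polynomial.eval 0) hc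
  have e1 := congrArg (Polynomial.eval 1) hc
  simp at e0 e1
  rw [e0] at e1
  norm_num at e1

lemma cast_add_X_ne_zero (n : ℤ) : ((n : K) + RatFunc.X) ≠ 0 := by
  intro h
  apply cast_sub_X_ne_zero (-n)
  have e : ((-n : ℤ) : K) - RatFunc.X = -(((n : K) + RatFunc.X)) := by push_cast; ring
  rw [e, h, neg_zero]

noncomputable def Af (mu : Ptn) (r : ℤ) (j : ℕ) : K :=
  ((((mu.conj j : ℤ) - (j : ℤ) + r : ℤ) : K)) + RatFunc.X

noncomputable def Bf (mu : Ptn) (r : ℤ) (i : ℕ) : K :=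
  ((((mu.row i : ℤ) - (i : ℤ) - r : ℤ) : K)) - RatFunc.X

lemma Af_ne_zero (mu : Ptn) (r : ℤ) (j : ℕ) : Af mu r j ≠ 0 := cast_add_X_ne_zero _

lemma Af_one_ne_zero (mu : Ptn) (r : ℤ) (j : ℕ) : Af mu r j + 1 ≠ 0 := by
  have h : Af mu r j + 1 = (((mu.conj j : ℤ) - (j : ℤ) + r + 1 : ℤ) : K) + RatFunc.X := by
    unfold Af; push_cast; ring
  rw [h]; exact cast_add_X_ne_zero _

lemma Bf_ne_zero (mu : Ptn) (r : ℤ) (i : ℕ) : Bf mu r i ≠ 0 := cast_sub_X_ne_zero _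

lemma Bf_one_ne_zero (mu : Ptn) (r : ℤ) (i : ℕ) : Bf mu r i + 1 ≠ 0 := by
  have h : Bf mu r i + 1 = (((mu.row i : ℤ) - (i : ℤ) - r + 1 : ℤ) : K) - RatFunc.X := by
    unfold Bf; push_cast; ring
  rw [h]; exact cast_sub_X_ne_zero _

lemma prod_ratio_telescope (f : ℕ → K) (hf : ∀ n, f n ≠ 0) {a b : ℕ} (hab : a ≤ b) :
    ∏ j ∈ Finset.Ioc a b, (f j * (f (j - 1))⁻¹) = f b * (f a)⁻¹ := by
  induction b, hab using Nat.le_induction with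
  | base =>
    rw [Finset.Ioc_self, Finset.prod_empty]
    exact (mul_inv_cancel₀ (hf a)).symm
  | succ b hab ih =>
    rw [Finset.prod_Ioc_succ_top (by omega), ih]
    have h1 : f a ≠ 0 := hf a
    have h2 : f b ≠ 0 := hf b
    have h3 : b + 1 - 1 = b := rfl
    rw [h3]
    field_simp

def RfinF (mu : Ptn) (L : ℕ) : Finset ℕ :=
  (Finset.Icc 1 L).filter fun i => mu.row (i + 1) < mu.row i

def AfinF (mu : Ptn) (L : ℕ) : Finset ℕ :=
  (Finset.Icc 1 L).filter fun i => i = 1 ∨ mu.row i < mu.row (i - 1)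

lemma helper1 {P Q R S b c : K} (hQ : Q ≠ 0) (hS : S ≠ 0) (hc : c ≠ 0)
    (h : P * Q⁻¹ = c * R * S⁻¹) : (P * b) * (Q * c)⁻¹ = b * R * S⁻¹ := by
  field_simp at h ⊢
  linear_combination b * h

lemma helper2 {P Q R S b c bb : K} (hQ : Q ≠ 0) (hS : S ≠ 0) (hc : c ≠ 0)
    (h : P * Q⁻¹ = bb * R * S⁻¹) : (P * b) * (Q * c)⁻¹ = b * (bb * R) * (c * S)⁻¹ := by
  field_simp at h ⊢
  linear_combination b * h

lemma T1 (mu : Ptn) (r : ℤ) {L : ℕ} (hL : 1 ≤ L) :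
    (∏ i ∈ Finset.Icc 1 L, Bf mu r i) * (∏ i ∈ Finset.Icc 1 L, (Bf mu r i + 1))⁻¹ =
      Bf mu r L * (∏ i ∈ RfinF mu (L - 1), Bf mu r i) *
        (∏ i ∈ AfinF mu L, (Bf mu r i + 1))⁻¹ := by
  induction L, hL using Nat.le_induction with
  | base =>
    have h0 : RfinF mu 0 = ∅ := by
      unfold RfinF
      rw [show Finset.Icc 1 0 = ∅ from rfl, Finset.filter_empty]
    have h1 : AfinF mu 1 = {1} := by
      unfold AfinF
      rw [Finset.Icc_self, Finset.filter_singleton, if_pos (Or.inl rfl)]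
    rw [h0, h1, Finset.Icc_self]
    simp
  | succ L hL ih =>
    have hQ : (∏ i ∈ Finset.Icc 1 L, (Bf mu r i + 1)) ≠ 0 :=
      Finset.prod_ne_zero_iff.mpr fun i _ => Bf_one_ne_zero mu r i
    have hS : (∏ i ∈ AfinF mu L, (Bf mu r i + 1)) ≠ 0 :=
      Finset.prod_ne_zero_iff.mpr fun i _ => Bf_one_ne_zero mu r i
    rw [Finset.prod_Icc_succ_top (by omega), Finset.prod_Icc_succ_top (by omega)]
    have hmono : mu.row (L + 1) ≤ mu.row L := row_antitone mu (by omega)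
    rcases eq_or_lt_of_le hmono with heq | hlt
    · have hR : RfinF mu (L + 1 - 1) = RfinF mu (L - 1) := by
        unfold RfinF
        ext i
        simp only [Finset.mem_filter, Finset.mem_Icc]
        constructor
        · rintro ⟨⟨hi1, hi2⟩, hp⟩
          rcases eq_or_ne i L with hiL | hiL
          · rw [hiL] at hp; omega
          · exact ⟨⟨hi1, by omega⟩, hp⟩
        · rintro ⟨⟨hi1, hi2⟩, hp⟩
          exact ⟨⟨hi1, by omega⟩, hp⟩
      have hA : AfinF mu (L + 1) = AfinF mu L := by
        unfold AfinF
        ext i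
        simp only [Finset.mem_filter, Finset.mem_Icc]
        constructor
        · rintro ⟨⟨hi1, hi2⟩, hp⟩
          rcases eq_or_ne i (L + 1) with hiL | hiL
          · rw [hiL] at hp
            have : L + 1 - 1 = L := by omega
            rw [this] at hp
            omega
          · exact ⟨⟨hi1, by omega⟩, hp⟩
        · rintro ⟨⟨hi1, hi2⟩, hp⟩
          exact ⟨⟨hi1, by omega⟩, hp⟩
      have hBB : Bf mu r (L + 1) + 1 = Bf mu r L := by
        unfold Bf
        have hc : ((mu.row (L + 1) : ℤ) : K) = ((mu.row L : ℤ) : K) := by rw [heq]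
        push_cast at hc ⊢
        rw [hc]
        ring
      rw [hR, hA, hBB]
      exact helper1 hQ hS (Bf_ne_zero mu r L) ih
    · have hR : RfinF mu (L + 1 - 1) = insert L (RfinF mu (L - 1)) := by
        unfold RfinF
        ext i
        simp only [Finset.mem_filter, Finset.mem_Icc, Finset.mem_insert]
        constructor
        · rintro ⟨⟨hi1, hi2⟩, hp⟩
          rcases eq_or_ne i L with hiL | hiL
          · exact Or.inl hiL
          · exact Or.inr ⟨⟨hi1, by omega⟩, hp⟩
        · rintro (hiL | ⟨⟨hi1, hi2⟩, hp⟩)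
          · rw [hiL]; exact ⟨⟨by omega, by omega⟩, hlt⟩
          · exact ⟨⟨hi1, by omega⟩, hp⟩
      have hA : AfinF mu (L + 1) = insert (L + 1) (AfinF mu L) := by
        unfold AfinF
        ext i
        simp only [Finset.mem_filter, Finset.mem_Icc, Finset.mem_insert]
        constructor
        · rintro ⟨⟨hi1, hi2⟩, hp⟩
          rcases eq_or_ne i (L + 1) with hiL | hiL
          · exact Or.inl hiL
          · exact Or.inr ⟨⟨hi1, by omega⟩, hp⟩
        · rintro (hiL | ⟨⟨hi1, hi2⟩, hp⟩)
          · rw [hiL]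
            refine ⟨⟨by omega, by omega⟩, Or.inr ?_⟩
            have : L + 1 - 1 = L := by omega
            rw [this]
            exact hlt
          · exact ⟨⟨hi1, by omega⟩, hp⟩
      have hnR : L ∉ RfinF mu (L - 1) := by
        unfold RfinF
        simp only [Finset.mem_filter, Finset.mem_Icc]
        omega
      have hnA : L + 1 ∉ AfinF mu L := by
        unfold AfinF
        simp only [Finset.mem_filter, Finset.mem_Icc]
        omega
      rw [hR, hA, Finset.prod_insert hnR, Finset.prod_insert hnA]
      exact helper2 hQ hS (Bf_one_ne_zero mu r (L + 1)) ih

noncomputable def Gf (mu : Ptn) (r : ℤ) (i0 : ℕ) : K :=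
  (∏ j ∈ Finset.Icc 1 (mu.row i0), Af mu r j) *
    (∏ j ∈ Finset.Icc 1 (mu.row i0), (Af mu r j + 1))⁻¹ *
    ((∏ i ∈ Finset.Icc 1 (i0 - 1), Bf mu r i) *
      (∏ i ∈ Finset.Icc 1 (i0 - 1), (Bf mu r i + 1))⁻¹) *
    (Bf mu r i0 + 1)⁻¹

lemma Icc_one_eq_Ioc_zero (n : ℕ) : Finset.Icc 1 n = Finset.Ioc 0 n := by
  ext k
  simp only [Finset.mem_Icc, Finset.mem_Ioc]
  omega

lemma helper3 {A A' T T' B B' q u v bb qq : K}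
    (hA' : A' ≠ 0) (hT' : T' ≠ 0) (hB' : B' ≠ 0) (hq : q ≠ 0) (hv : v ≠ 0)
    (htel : T * T'⁻¹ = u * v⁻¹) (hbb : bb = -u) (hqq : qq = -v) :
    (A * T) * (A' * T')⁻¹ * (B * B'⁻¹) * q⁻¹ =
      A * A'⁻¹ * ((B * bb) * (B' * q)⁻¹) * qq⁻¹ := by
  subst hbb hqq
  field_simp at htel ⊢
  linear_combination A * B * htel

lemma Gf_step (mu : Ptn) (r : ℤ) {i0 : ℕ} (hi0 : 1 ≤ i0) :
    Gf mu r i0 = Gf mu r (i0 + 1) := by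
  obtain ⟨i1, rfl⟩ : ∃ i1, i0 = i1 + 1 := ⟨i0 - 1, by omega⟩
  have hmm : mu.row (i1 + 1 + 1) ≤ mu.row (i1 + 1) := row_antitone mu (by omega)
  have hconj : ∀ j, mu.row (i1 + 1 + 1) < j → j ≤ mu.row (i1 + 1) → mu.conj j = i1 + 1 := by
    intro j hj1 hj2
    have h1 : i1 + 1 ≤ mu.conj j := (le_row_iff mu (by omega) (by omega)).mp hj2
    have h2 : ¬ (i1 + 1 + 1 ≤ mu.conj j) := fun hc =>
      absurd ((le_row_iff mu (by omega) (by omega)).mpr hc) (by omega)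
    omega
  have hfne : ∀ n : ℕ, (((i1 + 1 : ℤ) - (n : ℤ) + r : ℤ) : K) + RatFunc.X ≠ 0 :=
    fun n => cast_add_X_ne_zero _
  have htel := prod_ratio_telescope
    (fun j : ℕ => (((i1 + 1 : ℤ) - (j : ℤ) + r : ℤ) : K) + RatFunc.X) hfne hmm
  rw [Finset.prod_mul_distrib, Finset.prod_inv_distrib] at htel
  have hPA : ∏ j ∈ Finset.Ioc (mu.row (i1 + 1 + 1)) (mu.row (i1 + 1)), Af mu r j =
      ∏ j ∈ Finset.Ioc (mu.row (i1 + 1 + 1)) (mu.row (i1 + 1)),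
        ((((i1 + 1 : ℤ) - (j : ℤ) + r : ℤ) : K) + RatFunc.X) := by
    apply Finset.prod_congr rfl
    intro j hj
    rw [Finset.mem_Ioc] at hj
    unfold Af
    rw [hconj j hj.1 hj.2]
    push_cast
    ring
  have hPA' : ∏ j ∈ Finset.Ioc (mu.row (i1 + 1 + 1)) (mu.row (i1 + 1)), (Af mu r j + 1) =
      ∏ j ∈ Finset.Ioc (mu.row (i1 + 1 + 1)) (mu.row (i1 + 1)),
        ((((i1 + 1 : ℤ) - ((j - 1 : ℕ) : ℤ) + r : ℤ) : K) + RatFunc.X) := by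
    apply Finset.prod_congr rfl
    intro j hj
    rw [Finset.mem_Ioc] at hj
    unfold Af
    rw [hconj j hj.1 hj.2]
    have hj1 : ((j - 1 : ℕ) : ℤ) = (j : ℤ) - 1 := by omega
    rw [hj1]
    push_cast
    ring
  have hsplitA : ∏ j ∈ Finset.Icc 1 (mu.row (i1 + 1)), Af mu r j =
      (∏ j ∈ Finset.Icc 1 (mu.row (i1 + 1 + 1)), Af mu r j) *
        ∏ j ∈ Finset.Ioc (mu.row (i1 + 1 + 1)) (mu.row (i1 + 1)), Af mu r j := by
    rw [Icc_one_eq_Ioc_zero, Icc_one_eq_Ioc_zero]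
    exact (Finset.prod_Ioc_consecutive _ (Nat.zero_le _) hmm).symm
  have hsplitA' : ∏ j ∈ Finset.Icc 1 (mu.row (i1 + 1)), (Af mu r j + 1) =
      (∏ j ∈ Finset.Icc 1 (mu.row (i1 + 1 + 1)), (Af mu r j + 1)) *
        ∏ j ∈ Finset.Ioc (mu.row (i1 + 1 + 1)) (mu.row (i1 + 1)), (Af mu r j + 1) := by
    rw [Icc_one_eq_Ioc_zero, Icc_one_eq_Ioc_zero]
    exact (Finset.prod_Ioc_consecutive _ (Nat.zero_le _) hmm).symm
  have hBm : Bf mu r (i1 + 1) =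
      -((((i1 + 1 : ℤ) - ((mu.row (i1 + 1) : ℕ) : ℤ) + r : ℤ) : K) + RatFunc.X) := by
    unfold Bf
    push_cast
    ring
  have hBm' : Bf mu r (i1 + 1 + 1) + 1 =
      -((((i1 + 1 : ℤ) - ((mu.row (i1 + 1 + 1) : ℕ) : ℤ) + r : ℤ) : K) + RatFunc.X) := by
    unfold Bf
    push_cast
    ring
  unfold Gf
  have e1 : i1 + 1 - 1 = i1 := rfl
  have e2 : i1 + 1 + 1 - 1 = i1 + 1 := rfl
  rw [e1, e2]
  rw [Finset.prod_Icc_succ_top (show 1 ≤ i1 + 1 by omega) (Bf mu r),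
    Finset.prod_Icc_succ_top (show 1 ≤ i1 + 1 by omega) (fun i => Bf mu r i + 1)]
  rw [hsplitA, hsplitA', hPA, hPA']
  exact helper3
    (Finset.prod_ne_zero_iff.mpr fun j _ => Af_one_ne_zero mu r j)
    (Finset.prod_ne_zero_iff.mpr fun j _ => hfne _)
    (Finset.prod_ne_zero_iff.mpr fun i _ => Bf_one_ne_zero mu r i)
    (Bf_one_ne_zero mu r (i1 + 1))
    (hfne _)
    htel hBm hBm'

lemma Gf_chain (mu : Ptn) (r : ℤ) {i0 : ℕ} (hi0 : 1 ≤ i0) (k : ℕ) :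
    Gf mu r i0 = Gf mu r (i0 + k) := by
  induction k with
  | zero => rfl
  | succ k ih =>
    rw [ih, Gf_step mu r (show 1 ≤ i0 + k by omega)]
    rfl

lemma Gf_top (mu : Ptn) (r : ℤ) {L : ℕ} (hL : 1 ≤ L) (h0 : mu.row L = 0)
    (h1 : mu.row (L + 1) = 0) :
    Gf mu r (L + 1) =
      (∏ i ∈ RfinF mu (L - 1), Bf mu r i) *
        (∏ i ∈ AfinF mu L, (Bf mu r i + 1))⁻¹ := by
  unfold Gf
  rw [h1]
  have hL1 : L + 1 - 1 = L := rfl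
  rw [hL1, T1 mu r hL]
  have hBB : Bf mu r (L + 1) + 1 = Bf mu r L := by
    unfold Bf
    rw [h0, h1]
    push_cast
    ring
  rw [hBB, show Finset.Icc 1 0 = (∅ : Finset ℕ) from rfl, Finset.prod_empty]
  have hBL : Bf mu r L ≠ 0 := Bf_ne_zero mu r L
  have hA : (∏ i ∈ AfinF mu L, (Bf mu r i + 1)) ≠ 0 :=
    Finset.prod_ne_zero_iff.mpr fun i _ => Bf_one_ne_zero mu r i
  field_simp
  ring

lemma finprod_removable (mu : Ptn) (G : ℕ × ℕ → K) {M : ℕ}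
    (hM : ∀ i, 1 ≤ i → mu.row (i + 1) < mu.row i → i ≤ M) :
    ∏ᶠ b ∈ mu.removable, G b = ∏ i ∈ RfinF mu M, G (i, mu.row i) := by
  rw [removable_eq]
  have hset : {i : ℕ | 1 ≤ i ∧ mu.row (i + 1) < mu.row i} = ↑(RfinF mu M) := by
    ext i
    simp only [Set.mem_setOf_eq, RfinF, Finset.coe_filter, Finset.mem_Icc]
    constructor
    · rintro ⟨h1, h2⟩
      exact ⟨⟨h1, hM i h1 h2⟩, h2⟩
    · rintro ⟨⟨h1, _⟩, h2⟩
      exact ⟨h1, h2⟩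
  rw [hset, finprod_mem_image (fun a _ b _ h => congrArg Prod.fst h),
    finprod_mem_coe_finset]

lemma finprod_addable (mu : Ptn) (G : ℕ × ℕ → K) {M : ℕ}
    (hM : ∀ i, 1 ≤ i → (i = 1 ∨ mu.row i < mu.row (i - 1)) → i ≤ M) :
    ∏ᶠ g ∈ mu.addable, G g = ∏ i ∈ AfinF mu M, G (i, mu.row i + 1) := by
  rw [addable_eq]
  have hset : {i : ℕ | 1 ≤ i ∧ (i = 1 ∨ mu.row i < mu.row (i - 1))} = ↑(AfinF mu M) := by
    ext i
    simp only [Set.mem_setOf_eq, AfinF, Finset.coe_filter, Finset.mem_Icc]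
    constructor
    · rintro ⟨h1, h2⟩
      exact ⟨⟨h1, hM i h1 h2⟩, h2⟩
    · rintro ⟨⟨h1, _⟩, h2⟩
      exact ⟨h1, h2⟩
  rw [hset, finprod_mem_image (fun a _ b _ h => congrArg Prod.fst h),
    finprod_mem_coe_finset]

lemma cells_finite (l : Ptn) : l.cells.Finite := by
  obtain ⟨N, hN⟩ := l.finite_support
  apply Set.Finite.subset ((Set.finite_Icc 1 N).prod (Set.finite_Icc 1 (l.part 0)))
  rintro ⟨u, v⟩ ⟨h1, h2, h3⟩
  replace h1 : 1 ≤ u := h1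
  replace h2 : 1 ≤ v := h2
  replace h3 : v ≤ l.row u := h3
  have hr0 : l.row u ≤ l.part 0 := l.antitone (Nat.zero_le _)
  have hu : u ≤ N := by
    by_contra hc
    have h0 : l.row u = 0 := hN (u - 1) (by omega)
    omega
  exact ⟨Set.mem_Icc.mpr ⟨h1, hu⟩, Set.mem_Icc.mpr ⟨h2, by omega⟩⟩

lemma finprod_mem_ne_zero {s : Set (ℕ × ℕ)} (hs : s.Finite) {F : ℕ × ℕ → K}
    (hF : ∀ x ∈ s, F x ≠ 0) : (∏ᶠ x ∈ s, F x) ≠ 0 := by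
  rw [finprod_mem_eq_finite_toFinset_prod _ hs]
  exact Finset.prod_ne_zero_iff.mpr fun x hx => hF x (hs.mem_toFinset.mp hx)

lemma split_row (mu : Ptn) {i0 : ℕ} (hi0 : 1 ≤ i0) (F : ℕ × ℕ → K) :
    ∏ᶠ x ∈ mu.cells, F x =
      (∏ j ∈ Finset.Icc 1 (mu.row i0), F (i0, j)) *
        ∏ᶠ x ∈ {y ∈ mu.cells | y.1 ≠ i0}, F x := by
  have hfin := cells_finite mu
  have hslice : ((fun j => (i0, j)) '' (Set.Icc 1 (mu.row i0)) : Set (ℕ × ℕ)) =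
      {y ∈ mu.cells | y.1 = i0} := by
    ext ⟨u, v⟩
    simp only [Set.mem_image, Set.mem_Icc, Set.mem_setOf_eq, Prod.mk.injEq, Ptn.cells]
    constructor
    · rintro ⟨j, ⟨hj1, hj2⟩, rfl, rfl⟩
      exact ⟨⟨hi0, hj1, hj2⟩, rfl⟩
    · rintro ⟨⟨hm1, hm2, hm3⟩, rfl⟩
      refine ⟨v, ⟨hm2, ?_⟩, rfl, rfl⟩
      exact hm3
  have hdecomp : mu.cells = ((fun j => (i0, j)) '' (Set.Icc 1 (mu.row i0))) ∪
      {y ∈ mu.cells | y.1 ≠ i0} := by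
    rw [hslice]
    ext y
    simp only [Set.mem_union, Set.mem_setOf_eq]
    by_cases h : y.1 = i0 <;> tauto
  have hdisj : Disjoint ((fun j => (i0, j)) '' (Set.Icc 1 (mu.row i0)) : Set (ℕ × ℕ))
      {y ∈ mu.cells | y.1 ≠ i0} := by
    rw [hslice]
    rw [Set.disjoint_left]
    rintro y ⟨-, h1⟩ ⟨-, h2⟩
    exact h2 h1
  conv_lhs => rw [hdecomp]
  rw [finprod_mem_union hdisj ((Set.finite_Icc 1 (mu.row i0)).image _)
    (hfin.subset (fun y hy => hy.1)),
    finprod_mem_image (fun a _ b _ h => congrArg Prod.snd h),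
    ← Finset.coe_Icc, finprod_mem_coe_finset]

lemma split_col (nu : Ptn) {j0 : ℕ} (hj0 : 1 ≤ j0) (F : ℕ × ℕ → K) :
    ∏ᶠ x ∈ nu.cells, F x =
      (∏ i ∈ Finset.Icc 1 (nu.conj j0), F (i, j0)) *
        ∏ᶠ x ∈ {y ∈ nu.cells | y.2 ≠ j0}, F x := by
  have hfin := cells_finite nu
  have hslice : ((fun i => (i, j0)) '' (Set.Icc 1 (nu.conj j0)) : Set (ℕ × ℕ)) =
      {y ∈ nu.cells | y.2 = j0} := by
    ext ⟨u, v⟩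
    simp only [Set.mem_image, Set.mem_Icc, Set.mem_setOf_eq, Prod.mk.injEq, Ptn.cells]
    constructor
    · rintro ⟨i, ⟨hi1, hi2⟩, rfl, rfl⟩
      exact ⟨⟨hi1, hj0, (le_row_iff nu hi1 hj0).mpr hi2⟩, rfl⟩
    · rintro ⟨⟨hm1, hm2, hm3⟩, rfl⟩
      exact ⟨u, ⟨hm1, (le_row_iff nu hm1 hj0).mp hm3⟩, rfl, rfl⟩
  have hdecomp : nu.cells = ((fun i => (i, j0)) '' (Set.Icc 1 (nu.conj j0))) ∪
      {y ∈ nu.cells | y.2 ≠ j0} := by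
    rw [hslice]
    ext y
    simp only [Set.mem_union, Set.mem_setOf_eq]
    by_cases h : y.2 = j0 <;> tauto
  have hdisj : Disjoint ((fun i => (i, j0)) '' (Set.Icc 1 (nu.conj j0)) : Set (ℕ × ℕ))
      {y ∈ nu.cells | y.2 ≠ j0} := by
    rw [hslice]
    rw [Set.disjoint_left]
    rintro y ⟨-, h1⟩ ⟨-, h2⟩
    exact h2 h1
  conv_lhs => rw [hdecomp]
  rw [finprod_mem_union hdisj ((Set.finite_Icc 1 (nu.conj j0)).image _)
    (hfin.subset (fun y hy => hy.1)),
    finprod_mem_image (fun a _ b _ h => congrArg Prod.fst h),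
    ← Finset.coe_Icc, finprod_mem_coe_finset]

lemma split_single (lam nu : Ptn) (alpha : ℕ × ℕ) (hcells : lam.cells = nu.cells ∪ {alpha})
    (halpha : alpha ∉ nu.cells) (F : ℕ × ℕ → K) :
    ∏ᶠ x ∈ lam.cells, F x = F alpha * ∏ᶠ x ∈ nu.cells, F x := by
  rw [hcells, Set.union_comm,
    finprod_mem_union (Set.disjoint_left.mpr (by simpa using halpha))
      (Set.finite_singleton alpha) (cells_finite nu),
    finprod_mem_singleton]

lemma helper4 {PA PA' PB PB' q C D : K} (hPA : PA ≠ 0) (hPB : PB ≠ 0) :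
    (PA'⁻¹ * C) * (q⁻¹ * (PB'⁻¹ * D)) =
      ((PA⁻¹ * C) * (PB⁻¹ * D)) * (PA * PA'⁻¹ * (PB * PB'⁻¹) * q⁻¹) := by
  field_simp

end Kalg

end PtnAux

theorem statement2 (lam mu nu : Ptn) (alpha : ℕ × ℕ)
    (halpha : alpha ∈ lam.removable) (hnu : nu.cells = lam.cells \ {alpha}) :
    Theta2 lam mu / Theta2 nu mu =
      (∏ᶠ b ∈ mu.removable,
          ((Ptn.res b : RatFunc ℚ) - (Ptn.res alpha : RatFunc ℚ) - RatFunc.X)) *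
        ∏ᶠ g ∈ mu.addable,
          ((Ptn.res g : RatFunc ℚ) - (Ptn.res alpha : RatFunc ℚ) - RatFunc.X)⁻¹ := by
  classical
  obtain ⟨hαcells, -⟩ := halpha
  obtain ⟨hcorner, hnurow, hother, hstrict⟩ := PtnAux.remove_spec hαcells hnu
  have hα1 : 1 ≤ alpha.1 := hαcells.1
  have hα2 : 1 ≤ alpha.2 := hαcells.2.1
  set r : ℤ := Ptn.res alpha with hr
  have hrdef : r = (alpha.2 : ℤ) - (alpha.1 : ℤ) := hr
  -- conjugate facts
  have hconjlam : lam.conj alpha.2 = alpha.1 := by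
    have hub : ¬ (alpha.1 + 1 ≤ lam.conj alpha.2) := by
      intro hc
      have h2 := (PtnAux.le_row_iff lam (show 1 ≤ alpha.1 + 1 by omega) hα2).mpr hc
      omega
    have hlb : alpha.1 ≤ lam.conj alpha.2 :=
      (PtnAux.le_row_iff lam hα1 hα2).mp (le_of_eq hcorner)
    omega
  have hconjnu : nu.conj alpha.2 = alpha.1 - 1 := by
    have hub : ¬ (alpha.1 ≤ nu.conj alpha.2) := by
      intro hc
      have h2 := (PtnAux.le_row_iff nu hα1 hα2).mpr hc
      omega
    have hlb : alpha.1 - 1 ≤ nu.conj alpha.2 := by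
      rcases Nat.lt_or_ge alpha.1 2 with hsm | hsm
      · omega
      · apply (PtnAux.le_row_iff nu (show 1 ≤ alpha.1 - 1 by omega) hα2).mp
        have e := hother (alpha.1 - 1) (by omega) (by omega)
        have hmono := PtnAux.row_antitone lam (show alpha.1 - 1 ≤ alpha.1 by omega)
        omega
    omega
  have hconjother : ∀ j, 1 ≤ j → j ≠ alpha.2 → nu.conj j = lam.conj j := by
    intro j hj hne
    apply PtnAux.nat_eq_of_le_iff
    intro i hi
    rw [← PtnAux.le_row_iff nu hi hj, ← PtnAux.le_row_iff lam hi hj]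
    rcases eq_or_ne i alpha.1 with hieq | hine
    · rw [hieq, hnurow]
      omega
    · rw [hother i hi hine]
  -- generalized hook values on the special row/column
  have hgh1 : ∀ j : ℕ, Ptn.ghook lam mu (alpha.1, j) = (mu.conj j : ℤ) - (j : ℤ) + r + 1 := by
    intro j
    show (lam.row alpha.1 : ℤ) - (alpha.1 : ℤ) + (mu.conj j : ℤ) - (j : ℤ) + 1 = _
    rw [hrdef]
    omega
  have hgh2 : ∀ j : ℕ, Ptn.ghook nu mu (alpha.1, j) = (mu.conj j : ℤ) - (j : ℤ) + r := by
    intro j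
    show (nu.row alpha.1 : ℤ) - (alpha.1 : ℤ) + (mu.conj j : ℤ) - (j : ℤ) + 1 = _
    rw [hrdef]
    omega
  have hgh3 : ∀ i : ℕ, Ptn.ghook mu lam (i, alpha.2) = (mu.row i : ℤ) - (i : ℤ) - r + 1 := by
    intro i
    show (mu.row i : ℤ) - (i : ℤ) + (lam.conj alpha.2 : ℤ) - (alpha.2 : ℤ) + 1 = _
    rw [hrdef]
    omega
  have hgh4 : ∀ i : ℕ, Ptn.ghook mu nu (i, alpha.2) = (mu.row i : ℤ) - (i : ℤ) - r := by
    intro i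
    show (mu.row i : ℤ) - (i : ℤ) + (nu.conj alpha.2 : ℤ) - (alpha.2 : ℤ) + 1 = _
    rw [hrdef]
    omega
  have hAf1 : ∀ j : ℕ, ((Ptn.ghook lam mu (alpha.1, j) : RatFunc ℚ) + RatFunc.X) =
      PtnAux.Af mu r j + 1 := by
    intro j
    rw [hgh1 j]
    unfold PtnAux.Af
    push_cast
    ring
  have hAf0 : ∀ j : ℕ, ((Ptn.ghook nu mu (alpha.1, j) : RatFunc ℚ) + RatFunc.X) =
      PtnAux.Af mu r j := by
    intro j
    rw [hgh2 j]
    unfold PtnAux.Af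
    push_cast
    ring
  have hBf1 : ∀ i : ℕ, ((Ptn.ghook mu lam (i, alpha.2) : RatFunc ℚ) - RatFunc.X) =
      PtnAux.Bf mu r i + 1 := by
    intro i
    rw [hgh3 i]
    unfold PtnAux.Bf
    push_cast
    ring
  have hBf0 : ∀ i : ℕ, ((Ptn.ghook mu nu (i, alpha.2) : RatFunc ℚ) - RatFunc.X) =
      PtnAux.Bf mu r i := by
    intro i
    rw [hgh4 i]
    unfold PtnAux.Bf
    push_cast
    ring
  have hBfα : ((Ptn.ghook mu lam alpha : RatFunc ℚ) - RatFunc.X) =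
      PtnAux.Bf mu r alpha.1 + 1 := hBf1 alpha.1
  -- the common off-slice factors
  set C : RatFunc ℚ :=
    ∏ᶠ x ∈ {y ∈ mu.cells | y.1 ≠ alpha.1}, ((Ptn.ghook nu mu x : RatFunc ℚ) + RatFunc.X)⁻¹
    with hC
  set D : RatFunc ℚ :=
    ∏ᶠ x ∈ {y ∈ nu.cells | y.2 ≠ alpha.2}, ((Ptn.ghook mu nu x : RatFunc ℚ) - RatFunc.X)⁻¹
    with hD
  have hmuL : (∏ᶠ x ∈ mu.cells, ((Ptn.ghook lam mu x : RatFunc ℚ) + RatFunc.X)⁻¹) =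
      (∏ j ∈ Finset.Icc 1 (mu.row alpha.1), (PtnAux.Af mu r j + 1)⁻¹) * C := by
    rw [PtnAux.split_row mu hα1]
    congr 1
    · exact Finset.prod_congr rfl fun j _ => by rw [hAf1 j]
    · rw [hC]
      apply finprod_mem_congr rfl
      intro x hx
      have he : Ptn.ghook lam mu x = Ptn.ghook nu mu x := by
        unfold Ptn.ghook
        rw [(hother x.1 hx.1.1 hx.2).symm]
      rw [he]
  have hmuN : (∏ᶠ x ∈ mu.cells, ((Ptn.ghook nu mu x : RatFunc ℚ) + RatFunc.X)⁻¹) =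
      (∏ j ∈ Finset.Icc 1 (mu.row alpha.1), (PtnAux.Af mu r j)⁻¹) * C := by
    rw [PtnAux.split_row mu hα1]
    congr 1
    exact Finset.prod_congr rfl fun j _ => by rw [hAf0 j]
  have hnuL : (∏ᶠ x ∈ nu.cells, ((Ptn.ghook mu lam x : RatFunc ℚ) - RatFunc.X)⁻¹) =
      (∏ i ∈ Finset.Icc 1 (alpha.1 - 1), (PtnAux.Bf mu r i + 1)⁻¹) * D := by
    rw [PtnAux.split_col nu hα2, hconjnu]
    congr 1
    · exact Finset.prod_congr rfl fun i _ => by rw [hBf1 i]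
    · rw [hD]
      apply finprod_mem_congr rfl
      intro x hx
      have he : Ptn.ghook mu lam x = Ptn.ghook mu nu x := by
        unfold Ptn.ghook
        rw [hconjother x.2 hx.1.2.1 hx.2]
      rw [he]
  have hnuN : (∏ᶠ x ∈ nu.cells, ((Ptn.ghook mu nu x : RatFunc ℚ) - RatFunc.X)⁻¹) =
      (∏ i ∈ Finset.Icc 1 (alpha.1 - 1), (PtnAux.Bf mu r i)⁻¹) * D := by
    rw [PtnAux.split_col nu hα2, hconjnu]
    congr 1
    exact Finset.prod_congr rfl fun i _ => by rw [hBf0 i]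
  have hαnotnu : alpha ∉ nu.cells := by
    rw [hnu]
    intro hc
    exact hc.2 rfl
  have hcells : lam.cells = nu.cells ∪ {alpha} := by
    rw [hnu]
    exact (Set.diff_union_of_subset (Set.singleton_subset_iff.mpr hαcells)).symm
  have hlamL : (∏ᶠ x ∈ lam.cells, ((Ptn.ghook mu lam x : RatFunc ℚ) - RatFunc.X)⁻¹) =
      (PtnAux.Bf mu r alpha.1 + 1)⁻¹ *
        ((∏ i ∈ Finset.Icc 1 (alpha.1 - 1), (PtnAux.Bf mu r i + 1)⁻¹) * D) := by
    rw [PtnAux.split_single lam nu alpha hcells hαnotnu, hnuL, hBfα]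
  -- nonvanishing
  have hCne : C ≠ 0 := by
    rw [hC]
    exact PtnAux.finprod_mem_ne_zero ((PtnAux.cells_finite mu).subset fun y hy => hy.1)
      fun x _ => inv_ne_zero (PtnAux.cast_add_X_ne_zero _)
  have hDne : D ≠ 0 := by
    rw [hD]
    exact PtnAux.finprod_mem_ne_zero ((PtnAux.cells_finite nu).subset fun y hy => hy.1)
      fun x _ => inv_ne_zero (PtnAux.cast_sub_X_ne_zero _)
  have hPAne : (∏ j ∈ Finset.Icc 1 (mu.row alpha.1), PtnAux.Af mu r j) ≠ 0 :=
    Finset.prod_ne_zero_iff.mpr fun j _ => PtnAux.Af_ne_zero mu r j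
  have hPA'ne : (∏ j ∈ Finset.Icc 1 (mu.row alpha.1), (PtnAux.Af mu r j + 1)) ≠ 0 :=
    Finset.prod_ne_zero_iff.mpr fun j _ => PtnAux.Af_one_ne_zero mu r j
  have hPBne : (∏ i ∈ Finset.Icc 1 (alpha.1 - 1), PtnAux.Bf mu r i) ≠ 0 :=
    Finset.prod_ne_zero_iff.mpr fun i _ => PtnAux.Bf_ne_zero mu r i
  have hPB'ne : (∏ i ∈ Finset.Icc 1 (alpha.1 - 1), (PtnAux.Bf mu r i + 1)) ≠ 0 :=
    Finset.prod_ne_zero_iff.mpr fun i _ => PtnAux.Bf_one_ne_zero mu r i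
  -- assembling both Theta values
  have hTlam : Theta2 lam mu =
      ((∏ j ∈ Finset.Icc 1 (mu.row alpha.1), (PtnAux.Af mu r j + 1))⁻¹ * C) *
        ((PtnAux.Bf mu r alpha.1 + 1)⁻¹ *
          ((∏ i ∈ Finset.Icc 1 (alpha.1 - 1), (PtnAux.Bf mu r i + 1))⁻¹ * D)) := by
    unfold Theta2
    rw [hmuL, hlamL, Finset.prod_inv_distrib, Finset.prod_inv_distrib]
  have hTnu : Theta2 nu mu =
      ((∏ j ∈ Finset.Icc 1 (mu.row alpha.1), PtnAux.Af mu r j)⁻¹ * C) *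
        ((∏ i ∈ Finset.Icc 1 (alpha.1 - 1), PtnAux.Bf mu r i)⁻¹ * D) := by
    unfold Theta2
    rw [hmuN, hnuN, Finset.prod_inv_distrib, Finset.prod_inv_distrib]
  have hGf : Theta2 lam mu = Theta2 nu mu * PtnAux.Gf mu r alpha.1 := by
    rw [hTlam, hTnu]
    unfold PtnAux.Gf
    exact PtnAux.helper4 hPAne hPBne
  have hTnu_ne : Theta2 nu mu ≠ 0 := by
    rw [hTnu]
    exact mul_ne_zero (mul_ne_zero (inv_ne_zero hPAne) hCne)
      (mul_ne_zero (inv_ne_zero hPBne) hDne)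
  rw [hGf, mul_comm (Theta2 nu mu) _, mul_div_assoc, div_self hTnu_ne, mul_one]
  -- now identify the right-hand side
  obtain ⟨N, hN⟩ := mu.finite_support
  obtain ⟨L, hLa, hLN⟩ : ∃ L, alpha.1 ≤ L ∧ N + 1 ≤ L :=
    ⟨max (N + 1) alpha.1, le_max_right _ _, le_max_left _ _⟩
  have hL1 : 1 ≤ L := by omega
  have hrowL : mu.row L = 0 := hN (L - 1) (by omega)
  have hrowL1 : mu.row (L + 1) = 0 := hN L (by omega)
  have hrembound : ∀ i, 1 ≤ i → mu.row (i + 1) < mu.row i → i ≤ L - 1 := by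
    intro i h1 h2
    by_contra hc
    have hm := PtnAux.row_antitone mu (show L ≤ i by omega)
    omega
  have haddbound : ∀ i, 1 ≤ i → (i = 1 ∨ mu.row i < mu.row (i - 1)) → i ≤ L := by
    intro i h1 h2
    by_contra hc
    rcases h2 with h2 | h2
    · omega
    · have hm := PtnAux.row_antitone mu (show L ≤ i - 1 by omega)
      omega
  rw [PtnAux.finprod_removable mu _ hrembound, PtnAux.finprod_addable mu _ haddbound]
  have hremf : ∀ i ∈ PtnAux.RfinF mu (L - 1),
      ((Ptn.res (i, mu.row i) : RatFunc ℚ) - (r : RatFunc ℚ) - RatFunc.X) =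
        PtnAux.Bf mu r i := by
    intro i _
    have hres : Ptn.res (i, mu.row i) = (mu.row i : ℤ) - (i : ℤ) := rfl
    rw [hres]
    unfold PtnAux.Bf
    push_cast
    ring
  have haddf : ∀ i ∈ PtnAux.AfinF mu L,
      ((Ptn.res (i, mu.row i + 1) : RatFunc ℚ) - (r : RatFunc ℚ) - RatFunc.X)⁻¹ =
        (PtnAux.Bf mu r i + 1)⁻¹ := by
    intro i _
    have hres : Ptn.res (i, mu.row i + 1) = ((mu.row i + 1 : ℕ) : ℤ) - (i : ℤ) := rfl
    rw [hres]
    congr 1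
    unfold PtnAux.Bf
    push_cast
    ring
  rw [Finset.prod_congr rfl hremf, Finset.prod_congr rfl haddf, Finset.prod_inv_distrib]
  rw [PtnAux.Gf_chain mu r hα1 (L + 1 - alpha.1),
    show alpha.1 + (L + 1 - alpha.1) = L + 1 by omega,
    PtnAux.Gf_top mu r hL1 hrowL hrowL1]
end

section
/- Let λ be an m-multipartition of n and t a standard λ-tableau in which the number n occupies the node α; let μ be the m-multipartition obtained from λ by removing α. Then, as an identity in the rational function field ℚ(q_1,…,q_m, z): (z − res_t(n))/f(z) · ∏_{i=1}^{n−1} (z − res_t(i))² / ((z − res_t(i) + 1)(z − res_t(i) − 1)) = (z − res_t(n)) · ∏_{β∈R(μ)} (z − res(β)) · ∏_{γ∈A(μ)} (z − res(γ))^{-1}, where f(z) = (z − q_1)(z − q_2)⋯(z − q_m). -/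
open scoped BigOperators

/-- The field `ℚ(q_1, …, q_m, z)` of rational functions in `q_1, …, q_m` and `z`. -/
abbrev FZ (m : ℕ) : Type := FractionRing (MvPolynomial (Option (Fin m)) ℚ)

/-- The indeterminate `q_c` as an element of `ℚ(q_1, …, q_m, z)`. -/
noncomputable def qZ {m : ℕ} (c : Fin m) : FZ m :=
  algebraMap (MvPolynomial (Option (Fin m)) ℚ) (FZ m) (MvPolynomial.X (some c))

/-- The indeterminate `z` as an element of `ℚ(q_1, …, q_m, z)`. -/
noncomputable def zZ (m : ℕ) : FZ m :=
  algebraMap (MvPolynomial (Option (Fin m)) ℚ) (FZ m) (MvPolynomial.X none)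

/-- The residue `res (a, b, c) = b − a + q_c ∈ ℚ(q_1, …, q_m, z)` of a node `(a, b, c)`. -/
noncomputable def resZ {m : ℕ} (x : ℕ × ℕ × Fin m) : FZ m :=
  (x.2.1 : FZ m) - (x.1 : FZ m) + qZ x.2.2

namespace Ptn

lemma mem_cells (l : Ptn) (i j : ℕ) :
    (i, j) ∈ l.cells ↔ 1 ≤ i ∧ 1 ≤ j ∧ j ≤ l.part (i - 1) := Iff.rfl

lemma part_succ_le (l : Ptn) (k : ℕ) : l.part (k + 1) ≤ l.part k :=
  l.antitone (Nat.le_succ k)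

/-- builds a Ptn from a modified part function -/
def modify (l : Ptn) (k0 v : ℕ) (h1 : l.part (k0 + 1) ≤ v)
    (h2 : ∀ k, k0 = k + 1 → v ≤ l.part k) : Ptn where
  part k := if k = k0 then v else l.part k
  antitone := antitone_nat_of_succ_le (by
    intro k
    rcases Nat.lt_trichotomy (k+1) k0 with h | h | h
    · simp only [if_neg (by omega : ¬ k+1 = k0), if_neg (by omega : ¬ k = k0)]
      exact l.part_succ_le k
    · simp only [if_pos h, if_neg (by omega : ¬ k = k0)]
      exact h2 k h.symm
    · rcases Nat.eq_or_lt_of_le h with h' | h'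
      · have hk : k = k0 := by omega
        subst hk
        simp only [if_neg (by omega : ¬ k+1 = k), if_pos rfl]
        exact h1
      · simp only [if_neg (by omega : ¬ k+1 = k0), if_neg (by omega : ¬ k = k0)]
        exact l.part_succ_le k)
  finite_support := by
    obtain ⟨N, hN⟩ := l.finite_support
    rcases Nat.eq_zero_or_pos v with hv | hv
    · exact ⟨N, fun k hk => by by_cases h : k = k0 <;> simp [h, hv, hN k hk]⟩
    · refine ⟨max N (k0+1), fun k hk => ?_⟩
      have : ¬ k = k0 := by omega
      simp [this, hN k (by omega)]

lemma removable_iff (l : Ptn) (i j : ℕ) :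
    (i, j) ∈ l.removable ↔ 1 ≤ i ∧ 1 ≤ j ∧ j = l.part (i - 1) ∧ l.part i < j := by
  constructor
  · rintro ⟨hc, m, hm⟩
    have hset : ∀ a b : ℕ, (a, b) ∈ m.cells ↔ (a, b) ∈ l.cells ∧ (a, b) ≠ (i, j) := by
      intro a b; rw [hm]; simp [Set.mem_diff]
    obtain ⟨hi, hj, hle⟩ := (l.mem_cells i j).1 hc
    have hjeq : j = l.part (i - 1) := by
      by_contra hne
      have h1 : (i, l.part (i-1)) ∈ m.cells := by
        rw [hset]
        exact ⟨(l.mem_cells _ _).2 ⟨hi, by omega, le_refl _⟩, by simp; omega⟩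
      have h2 : (i, j) ∉ m.cells := by rw [hset]; simp
      rw [m.mem_cells] at h1 h2
      simp only [not_and, not_le] at h2
      omega
    refine ⟨hi, hj, hjeq, ?_⟩
    by_contra hge
    push_neg at hge
    have h1 : (i + 1, j) ∈ m.cells := by
      rw [hset]
      refine ⟨(l.mem_cells _ _).2 ⟨by omega, by omega, by simpa using hge⟩, by simp⟩
    have h2 : (i, j) ∉ m.cells := by rw [hset]; simp
    rw [m.mem_cells] at h1 h2
    have hmono : m.part (i + 1 - 1) ≤ m.part (i - 1) := m.antitone (by omega)
    simp only [not_and, not_le] at h2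
    omega
  · rintro ⟨hi, hj, hjeq, hlt⟩
    refine ⟨(l.mem_cells _ _).2 ⟨hi, hj, le_of_eq hjeq⟩, ?_⟩
    refine ⟨l.modify (i-1) (j-1)
      (by
        have e : i - 1 + 1 = i := by omega
        rw [e]; omega)
      (fun k hk => by
        have := l.part_succ_le k
        have h2 : l.part (k+1) = l.part (i-1) := by rw [← hk]
        omega), ?_⟩
    ext ⟨a, b⟩
    simp only [mem_cells, modify, Set.mem_diff, Set.mem_singleton_iff, Prod.mk.injEq]
    constructor
    · rintro ⟨ha, hb, hble⟩
      by_cases h : a - 1 = i - 1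
      · rw [if_pos h] at hble
        have hai : a = i := by omega
        subst hai
        exact ⟨⟨ha, hb, by omega⟩, by omega⟩
      · rw [if_neg h] at hble
        exact ⟨⟨ha, hb, hble⟩, fun hai => absurd (by omega : a - 1 = i - 1) h⟩
    · rintro ⟨⟨ha, hb, hble⟩, hne⟩
      refine ⟨ha, hb, ?_⟩
      by_cases h : a - 1 = i - 1
      · rw [if_pos h]
        have hai : a = i := by omega
        subst hai
        have : b ≠ j := fun hbj => hne ⟨rfl, hbj⟩
        omega
      · rw [if_neg h]; exact hble

lemma addable_iff (l : Ptn) (i j : ℕ) :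
    (i, j) ∈ l.addable ↔ 1 ≤ i ∧ j = l.part (i - 1) + 1 ∧ (i = 1 ∨ j ≤ l.part (i - 2)) := by
  constructor
  · rintro ⟨hnc, m, hm⟩
    have hset : ∀ a b : ℕ, (a, b) ∈ m.cells ↔ (a, b) ∈ l.cells ∨ (a, b) = (i, j) := by
      intro a b; rw [hm]; simp [Set.mem_union]; tauto
    have hx : (i, j) ∈ m.cells := by rw [hset]; simp
    rw [m.mem_cells] at hx
    obtain ⟨hi, hj, hle⟩ := hx
    have hgt : l.part (i - 1) < j := by
      by_contra hge
      exact hnc ((l.mem_cells _ _).2 ⟨hi, hj, by omega⟩)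
    have hjeq : j = l.part (i - 1) + 1 := by
      by_contra hne
      have h1 : (i, l.part (i - 1) + 1) ∈ m.cells := by
        rw [m.mem_cells]; exact ⟨hi, by omega, by omega⟩
      rw [hset] at h1
      rcases h1 with h1 | h1
      · rw [l.mem_cells] at h1; omega
      · simp only [Prod.mk.injEq] at h1; omega
    refine ⟨hi, hjeq, ?_⟩
    by_cases hi1 : i = 1
    · exact Or.inl hi1
    · right
      have h1 : (i - 1, j) ∈ m.cells := by
        rw [m.mem_cells]
        refine ⟨by omega, hj, ?_⟩
        calc j ≤ m.part (i - 1) := hle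
          _ ≤ m.part (i - 1 - 1) := m.antitone (by omega)
      rw [hset] at h1
      rcases h1 with h1 | h1
      · rw [l.mem_cells] at h1
        have e : i - 1 - 1 = i - 2 := by omega
        rw [e] at h1; exact h1.2.2
      · simp only [Prod.mk.injEq] at h1; omega
  · rintro ⟨hi, hjeq, hcond⟩
    have hnc : (i, j) ∉ l.cells := by
      rw [l.mem_cells]; push_neg; intro _ _; omega
    refine ⟨hnc, ?_⟩
    refine ⟨l.modify (i-1) j
      (by have := l.part_succ_le (i-1); omega)
      (fun k hk => by
        rcases hcond with h | h
        · omega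
        · have e : i - 2 = k := by omega
          rw [← e]; exact h), ?_⟩
    ext ⟨a, b⟩
    simp only [mem_cells, modify, Set.mem_union, Set.mem_singleton_iff, Prod.mk.injEq]
    constructor
    · rintro ⟨ha, hb, hble⟩
      by_cases h : a - 1 = i - 1
      · rw [if_pos h] at hble
        have hai : a = i := by omega
        subst hai
        rcases Nat.eq_or_lt_of_le hble with h' | h'
        · right; exact ⟨rfl, h'⟩
        · left; exact ⟨ha, hb, by omega⟩
      · rw [if_neg h] at hble
        left; exact ⟨ha, hb, hble⟩
    · rintro (⟨ha, hb, hble⟩ | ⟨hai, hbj⟩)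
      · refine ⟨ha, hb, ?_⟩
        by_cases h : a - 1 = i - 1
        · rw [if_pos h]
          have hai : a = i := by omega
          subst hai
          omega
        · rw [if_neg h]; exact hble
      · subst hai; subst hbj
        exact ⟨hi, by omega, by rw [if_pos rfl]⟩

end Ptn

/-- key nonvanishing -/
lemma key_ne {m : ℕ} (c : Fin m) (a : ℤ) : zZ m - qZ c + (a : FZ m) ≠ 0 := by
  have hinj : Function.Injective
      (algebraMap (MvPolynomial (Option (Fin m)) ℚ) (FZ m)) :=
    IsFractionRing.injective _ _
  intro h
  have : (MvPolynomial.X none - MvPolynomial.X (some c) + MvPolynomial.C (a : ℚ) :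
      MvPolynomial (Option (Fin m)) ℚ) = 0 := by
    apply hinj
    rw [map_zero, map_add, map_sub]
    rw [← h]
    congr 1
    rw [show (MvPolynomial.C (a:ℚ) : MvPolynomial (Option (Fin m)) ℚ)
        = ((a : ℤ) : MvPolynomial (Option (Fin m)) ℚ) by exact (map_intCast (MvPolynomial.C : ℚ →+* MvPolynomial (Option (Fin m)) ℚ) a).symm, map_intCast]
  have hc := congrArg (MvPolynomial.coeff (Finsupp.single (none : Option (Fin m)) 1)) this
  rw [MvPolynomial.coeff_add, MvPolynomial.coeff_sub, MvPolynomial.coeff_X,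
    MvPolynomial.coeff_zero] at hc
  have h1 : MvPolynomial.coeff (Finsupp.single (none : Option (Fin m)) 1)
      (MvPolynomial.X (some c) : MvPolynomial (Option (Fin m)) ℚ) = 0 := by
    rw [MvPolynomial.coeff_X']
    rw [if_neg]
    intro he
    have := DFunLike.congr_fun he none
    simp [Finsupp.single_apply] at this
  have h2 : MvPolynomial.coeff (Finsupp.single (none : Option (Fin m)) 1)
      (MvPolynomial.C (a:ℚ) : MvPolynomial (Option (Fin m)) ℚ) = 0 := by
    rw [MvPolynomial.coeff_C, if_neg]
    intro he
    have := DFunLike.congr_fun he.symm none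
    simp [Finsupp.single_apply] at this
  rw [h1, h2] at hc
  norm_num at hc

open Finset

variable {K : Type*} [Field K]

lemma tele_prod (f : ℕ → K) (N : ℕ) :
    (∏ k ∈ range N, f k) * f N = f 0 * ∏ k ∈ range N, f (k+1) := by
  rw [← Finset.prod_range_succ, Finset.prod_range_succ']; ring

lemma row_lemma (a : K) (l : ℕ) :
    (∏ j ∈ range l, (a - j)^2) * ((a + 1) * (a - l)) =
      (a - l + 1) * a * ∏ j ∈ range l, ((a - j + 1) * (a - j - 1)) := by
  induction l with
  | zero => simp
  | succ l ih =>
    rw [Finset.prod_range_succ, Finset.prod_range_succ]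
    push_cast
    linear_combination ((a - l) * (a - l - 1)) * ih

lemma percomp (w : K) (L : ℕ → ℕ) (N : ℕ)
    (hne : ∀ t : ℤ, w + (t : K) ≠ 0) (hmono : ∀ k, L (k+1) ≤ L k)
    (hN : L N = 0) :
    (∏ k ∈ range N, ∏ j ∈ range (L k), (w + k - j)^2) *
        ((w - L 0) * ∏ k ∈ (range N).filter (fun k => L (k+1) < L k),
          (w + (k+1 : ℕ) - L (k+1))) =
      w * (∏ k ∈ (range N).filter (fun k => L (k+1) < L k), (w + k + 1 - L k)) *
        ∏ k ∈ range N, ∏ j ∈ range (L k), ((w + k - j + 1) * (w + k - j - 1)) := by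
  set v : ℕ → K := fun k => w + k - L k with hv
  have hvne : ∀ k, v k ≠ 0 := by
    intro k
    have h := hne ((k : ℤ) - (L k : ℤ))
    simp only [hv]
    intro h0
    apply h
    rw [← h0]; push_cast; ring
  have hwk : ∀ k : ℕ, w + (k : K) + 1 ≠ 0 := by
    intro k
    have h := hne ((k : ℤ) + 1)
    intro h0; apply h; rw [← h0]; push_cast; ring
  have step2 : (∏ k ∈ range N, ∏ j ∈ range (L k), (w + k - j)^2) *
      ((∏ k ∈ range N, (w + k + 1)) * ∏ k ∈ range N, v k) =
      ((∏ k ∈ range N, (v k + 1)) * ∏ k ∈ range N, (w + k)) *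
        ∏ k ∈ range N, ∏ j ∈ range (L k), ((w + k - j + 1) * (w + k - j - 1)) := by
    calc (∏ k ∈ range N, ∏ j ∈ range (L k), (w + k - j)^2) *
        ((∏ k ∈ range N, (w + k + 1)) * ∏ k ∈ range N, v k)
        = ∏ k ∈ range N, ((∏ j ∈ range (L k), (w + k - j)^2) * ((w + k + 1) * v k)) := by
          rw [Finset.prod_mul_distrib, Finset.prod_mul_distrib]
      _ = ∏ k ∈ range N, ((v k + 1) * ((w + k) *
            ∏ j ∈ range (L k), ((w + k - j + 1) * (w + k - j - 1)))) := by
          refine Finset.prod_congr rfl fun k _ => ?_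
          simp only [hv]
          linear_combination row_lemma (w + (k : K)) (L k)
      _ = ((∏ k ∈ range N, (v k + 1)) * ∏ k ∈ range N, (w + k)) *
            ∏ k ∈ range N, ∏ j ∈ range (L k), ((w + k - j + 1) * (w + k - j - 1)) := by
          rw [Finset.prod_mul_distrib, Finset.prod_mul_distrib]; ring
  have step3 : (∏ k ∈ range N, (v k + 1)) *
      ∏ k ∈ (range N).filter (fun k => L (k+1) < L k), v (k+1) =
      (∏ k ∈ range N, v (k+1)) *
      ∏ k ∈ (range N).filter (fun k => L (k+1) < L k), (v k + 1) := by
    rw [← Finset.prod_filter_mul_prod_filter_not (range N) (fun k => L (k+1) < L k)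
      (fun k => v k + 1),
      ← Finset.prod_filter_mul_prod_filter_not (range N) (fun k => L (k+1) < L k)
      (fun k => v (k+1))]
    have hflat : ∏ k ∈ (range N).filter (fun k => ¬ L (k+1) < L k), (v k + 1) =
        ∏ k ∈ (range N).filter (fun k => ¬ L (k+1) < L k), v (k+1) := by
      refine Finset.prod_congr rfl fun k hk => ?_
      simp only [Finset.mem_filter, not_lt] at hk
      have hLk : L (k+1) = L k := le_antisymm (hmono k) hk.2
      simp only [hv, hLk]
      push_cast
      ring
    rw [hflat]; ring
  have step4 : (∏ k ∈ range N, v k) * v N = v 0 * ∏ k ∈ range N, v (k+1) :=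
    tele_prod v N
  have step5 : (∏ k ∈ range N, (w + k)) * (w + N) = w * ∏ k ∈ range N, (w + k + 1) := by
    have h := tele_prod (fun k => w + (k : K)) N
    have e : ∏ k ∈ range N, (w + ((k+1 : ℕ) : K)) = ∏ k ∈ range N, (w + (k:K) + 1) :=
      Finset.prod_congr rfl (fun k _ => by push_cast; ring)
    rw [e] at h
    rw [h, Nat.cast_zero, add_zero]
  have hvN : v N = w + N := by simp [hv, hN]
  have hv0 : v 0 = w - L 0 := by simp only [hv]; push_cast; ring
  have hDrem : ∏ k ∈ (range N).filter (fun k => L (k+1) < L k), (w + k + 1 - L k) =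
      ∏ k ∈ (range N).filter (fun k => L (k+1) < L k), (v k + 1) := by
    refine Finset.prod_congr rfl fun k _ => ?_; simp only [hv]; ring
  have hDadd : ∏ k ∈ (range N).filter (fun k => L (k+1) < L k), (w + (k+1:ℕ) - L (k+1)) =
      ∏ k ∈ (range N).filter (fun k => L (k+1) < L k), v (k+1) := by
    refine Finset.prod_congr rfl fun k _ => ?_; simp only [hv]
  rw [hDrem, hDadd, ← hv0]
  have hprodne : (∏ k ∈ range N, (w + (k:K) + 1)) * ∏ k ∈ range N, v k ≠ 0 :=
    mul_ne_zero (Finset.prod_ne_zero_iff.2 fun k _ => hwk k)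
      (Finset.prod_ne_zero_iff.2 fun k _ => hvne k)
  apply mul_right_cancel₀ hprodne
  linear_combination
    (v 0 * (∏ k ∈ (range N).filter (fun k => L (k+1) < L k), v (k+1))) * step2 +
    ((∏ k ∈ range N, (w + (k:K))) *
      (∏ k ∈ range N, ∏ j ∈ range (L k), ((w + k - j + 1) * (w + k - j - 1))) * v 0) * step3 +
    ((∏ k ∈ (range N).filter (fun k => L (k+1) < L k), (v k + 1)) *
      (∏ k ∈ range N, (w + (k:K))) *
      (∏ k ∈ range N, ∏ j ∈ range (L k), ((w + k - j + 1) * (w + k - j - 1)))) * (-1 : K) * step4 +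
    ((∏ k ∈ (range N).filter (fun k => L (k+1) < L k), (v k + 1)) *
      (∏ k ∈ range N, ∏ j ∈ range (L k), ((w + k - j + 1) * (w + k - j - 1))) *
      (∏ k ∈ range N, v k)) * step5 +
    ((∏ k ∈ (range N).filter (fun k => L (k+1) < L k), (v k + 1)) *
      (∏ k ∈ range N, ∏ j ∈ range (L k), ((w + k - j + 1) * (w + k - j - 1))) *
      (∏ k ∈ range N, v k) * (∏ k ∈ range N, (w + (k:K)))) * hvN

open Finset

lemma shift_ne {m : ℕ} (c : Fin m) (x : FZ m) (t : ℤ) (h : x = zZ m - qZ c + (t : FZ m)) :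
    x ≠ 0 := h ▸ key_ne c t

section Comb

variable {m : ℕ} (mu : MPtn m) (N : ℕ)

def Dset (p : Ptn) (N : ℕ) : Finset ℕ :=
  (range N).filter fun k => p.part (k+1) < p.part k

def remF : Finset (ℕ × ℕ × Fin m) :=
  univ.biUnion fun c => (Dset (mu c) N).image fun k => (k+1, (mu c).part k, c)

def addF : Finset (ℕ × ℕ × Fin m) :=
  univ.biUnion fun c =>
    insert (1, (mu c).part 0 + 1, c)
      ((Dset (mu c) N).image fun k => (k+2, (mu c).part (k+1) + 1, c))

def cellF : Finset (ℕ × ℕ × Fin m) :=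
  univ.biUnion fun c =>
    (range N).biUnion fun k => (range ((mu c).part k)).image fun j => (k+1, j+1, c)

variable (hN : ∀ (c : Fin m) (k : ℕ), N ≤ k → (mu c).part k = 0)
include hN

lemma remF_coe : (remF mu N : Set (ℕ × ℕ × Fin m)) = mu.removable := by
  ext ⟨i, j, c⟩
  rw [Finset.mem_coe]
  simp only [remF, Finset.mem_biUnion, Finset.mem_univ, true_and, Finset.mem_image,
    Dset, Finset.mem_filter, Finset.mem_range]
  constructor
  · rintro ⟨c', k, ⟨hkN, hdesc⟩, he⟩
    rw [← he]
    show (k + 1, (mu c').part k) ∈ (mu c').removable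
    rw [Ptn.removable_iff]
    have e2 : k + 1 - 1 = k := by omega
    rw [e2]
    exact ⟨by omega, by omega, rfl, hdesc⟩
  · intro hx
    have hx' : (i, j) ∈ (mu c).removable := hx
    rw [Ptn.removable_iff] at hx'
    obtain ⟨hi, hj, hjeq, hlt⟩ := hx'
    have hkN : i - 1 < N := by
      by_contra hge
      have := hN c (i - 1) (by omega)
      omega
    refine ⟨c, i - 1, ⟨hkN, ?_⟩, ?_⟩
    · have e : i - 1 + 1 = i := by omega
      rw [e]; omega
    · simp only [Prod.mk.injEq]
      exact ⟨by omega, hjeq.symm, by trivial⟩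

lemma addF_coe : (addF mu N : Set (ℕ × ℕ × Fin m)) = mu.addable := by
  ext ⟨i, j, c⟩
  rw [Finset.mem_coe]
  simp only [addF, Finset.mem_biUnion, Finset.mem_univ, true_and, Finset.mem_insert,
    Finset.mem_image, Dset, Finset.mem_filter, Finset.mem_range]
  constructor
  · rintro ⟨c', h | ⟨k, ⟨hkN, hdesc⟩, he⟩⟩
    · rw [h]
      show (1, (mu c').part 0 + 1) ∈ (mu c').addable
      rw [Ptn.addable_iff]
      exact ⟨le_refl 1, by simp, Or.inl rfl⟩
    · rw [← he]
      show (k + 2, (mu c').part (k+1) + 1) ∈ (mu c').addable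
      rw [Ptn.addable_iff]
      have e1 : k + 2 - 1 = k + 1 := by omega
      have e2 : k + 2 - 2 = k := by omega
      rw [e1, e2]
      exact ⟨by omega, rfl, Or.inr (by omega)⟩
  · intro hx
    have hx' : (i, j) ∈ (mu c).addable := hx
    rw [Ptn.addable_iff] at hx'
    obtain ⟨hi, hjeq, hcond⟩ := hx'
    refine ⟨c, ?_⟩
    rcases hcond with h1 | hle
    · left
      subst h1
      rw [Prod.mk.injEq, Prod.mk.injEq]
      exact ⟨by trivial, by simpa using hjeq, by trivial⟩
    · by_cases h1 : i = 1
      · left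
        subst h1
        simp only [Prod.mk.injEq]
        exact ⟨by trivial, by simpa using hjeq, by trivial⟩
      · right
        have hi2 : 2 ≤ i := by omega
        have hkN : i - 2 < N := by
          by_contra hge
          have := hN c (i - 2) (by omega)
          omega
        refine ⟨i - 2, ⟨hkN, ?_⟩, ?_⟩
        · have e1 : i - 2 + 1 = i - 1 := by omega
          rw [e1]; omega
        · simp only [Prod.mk.injEq]
          have e1 : i - 2 + 1 = i - 1 := by omega
          rw [e1]
          exact ⟨by omega, hjeq.symm, by trivial⟩

lemma cellF_coe : (cellF mu N : Set (ℕ × ℕ × Fin m)) = mu.cells := by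
  ext ⟨i, j, c⟩
  rw [Finset.mem_coe]
  simp only [cellF, Finset.mem_biUnion, Finset.mem_univ, true_and, Finset.mem_image,
    Finset.mem_range]
  constructor
  · rintro ⟨c', k, hkN, j', hj', he⟩
    rw [← he]
    show (k + 1, j' + 1) ∈ (mu c').cells
    rw [Ptn.mem_cells]
    have e : k + 1 - 1 = k := by omega
    rw [e]
    omega
  · intro hx
    have hx' : (i, j) ∈ (mu c).cells := hx
    rw [Ptn.mem_cells] at hx'
    obtain ⟨hi, hj, hle⟩ := hx'
    have hkN : i - 1 < N := by
      by_contra hge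
      have := hN c (i - 1) (by omega)
      omega
    refine ⟨c, i - 1, hkN, j - 1, by omega, ?_⟩
    simp only [Prod.mk.injEq]
    exact ⟨by omega, by omega, by trivial⟩

omit hN

lemma prod_remF (F : ℕ × ℕ × Fin m → FZ m) :
    ∏ x ∈ remF mu N, F x =
      ∏ c : Fin m, ∏ k ∈ Dset (mu c) N, F (k+1, (mu c).part k, c) := by
  rw [remF, Finset.prod_biUnion]
  · refine Finset.prod_congr rfl fun c _ => ?_
    rw [Finset.prod_image]
    intro x _ y _ h
    simp only [Prod.mk.injEq] at h
    omega
  · intro c _ c' _ hcc'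
    simp only [Function.onFun, Finset.disjoint_left, Finset.mem_image]
    rintro x ⟨k, _, rfl⟩ ⟨k', _, he⟩
    simp only [Prod.mk.injEq] at he
    exact hcc' he.2.2.symm

lemma prod_addF (F : ℕ × ℕ × Fin m → FZ m) :
    ∏ x ∈ addF mu N, F x =
      ∏ c : Fin m, (F (1, (mu c).part 0 + 1, c) *
        ∏ k ∈ Dset (mu c) N, F (k+2, (mu c).part (k+1) + 1, c)) := by
  rw [addF, Finset.prod_biUnion]
  · refine Finset.prod_congr rfl fun c _ => ?_
    rw [Finset.prod_insert, Finset.prod_image]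
    · intro x _ y _ h
      simp only [Prod.mk.injEq] at h
      omega
    · simp only [Finset.mem_image]
      rintro ⟨k, _, he⟩
      simp only [Prod.mk.injEq] at he
      omega
  · intro c _ c' _ hcc'
    simp only [Function.onFun, Finset.disjoint_left, Finset.mem_insert, Finset.mem_image]
    rintro x (rfl | ⟨k, _, rfl⟩) h2 <;>
    · rcases h2 with h | ⟨k', _, he⟩
      · simp only [Prod.mk.injEq] at h
        exact hcc' h.2.2
      · simp only [Prod.mk.injEq] at he
        exact hcc' he.2.2.symm

lemma prod_cellF (F : ℕ × ℕ × Fin m → FZ m) :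
    ∏ x ∈ cellF mu N, F x =
      ∏ c : Fin m, ∏ k ∈ range N, ∏ j ∈ range ((mu c).part k), F (k+1, j+1, c) := by
  rw [cellF, Finset.prod_biUnion]
  · refine Finset.prod_congr rfl fun c _ => ?_
    rw [Finset.prod_biUnion]
    · refine Finset.prod_congr rfl fun k _ => ?_
      rw [Finset.prod_image]
      intro x _ y _ h
      simp only [Prod.mk.injEq] at h
      omega
    · intro k _ k' _ hkk'
      simp only [Function.onFun, Finset.disjoint_left, Finset.mem_image]
      rintro x ⟨j, _, rfl⟩ ⟨j', _, he⟩
      simp only [Prod.mk.injEq] at he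
      exact hkk' (by omega)
  · intro c _ c' _ hcc'
    simp only [Function.onFun, Finset.disjoint_left, Finset.mem_biUnion, Finset.mem_image]
    rintro x ⟨k, _, j, _, rfl⟩ ⟨k', _, j', _, he⟩
    simp only [Prod.mk.injEq] at he
    exact hcc' he.2.2.symm

end Comb


set_option maxHeartbeats 1000000 in
theorem statement5 {m n : ℕ} (hn : 0 < n) (lam : MPtn m) (hlam : lam.size = n)
    (T : Fin n → ℕ × ℕ × Fin m) (hT : IsTableau lam n T) (hTstd : IsStandard T)
    (alpha : ℕ × ℕ × Fin m) (halpha : T ⟨n - 1, by omega⟩ = alpha)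
    (mu : MPtn m) (hmu : mu.cells = lam.cells \ {alpha}) :
    (zZ m - resZ alpha) / (∏ c : Fin m, (zZ m - qZ c)) *
        ∏ k ∈ Finset.univ.erase (⟨n - 1, by omega⟩ : Fin n),
          ((zZ m - resZ (T k)) ^ 2 /
            ((zZ m - resZ (T k) + 1) * (zZ m - resZ (T k) - 1))) =
      (zZ m - resZ alpha) * (∏ᶠ b ∈ mu.removable, (zZ m - resZ b)) *
        ∏ᶠ g ∈ mu.addable, (zZ m - resZ g)⁻¹ := by
  obtain ⟨hTinj, hTrange⟩ := hT
  have halam : alpha ∈ lam.cells := by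
    rw [← hTrange, ← halpha]; exact Set.mem_range_self _
  -- choose N
  have hex : ∀ c : Fin m, ∃ Nc : ℕ, ∀ k, Nc ≤ k → (mu c).part k = 0 :=
    fun c => (mu c).finite_support
  choose Nf hNf using hex
  set N := Finset.univ.sup Nf with hNdef
  have hN : ∀ (c : Fin m) (k : ℕ), N ≤ k → (mu c).part k = 0 :=
    fun c k hk => hNf c k (le_trans (Finset.le_sup (Finset.mem_univ c)) hk)
  -- nonvanishing facts
  have hres : ∀ (x : ℕ × ℕ × Fin m) (t : ℤ), zZ m - resZ x + (t : FZ m) ≠ 0 :=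
    fun x t => shift_ne x.2.2 _ ((x.1 : ℤ) - (x.2.1 : ℤ) + t)
      (by simp only [resZ]; push_cast; ring)
  have hres0 : ∀ x : ℕ × ℕ × Fin m, zZ m - resZ x ≠ 0 := fun x => by
    have h := hres x 0; intro h0; exact h (by rw [← h0]; push_cast; ring)
  have hresp : ∀ x : ℕ × ℕ × Fin m, zZ m - resZ x + 1 ≠ 0 := fun x => by
    have h := hres x 1; intro h0; exact h (by rw [← h0]; push_cast; ring)
  have hresm : ∀ x : ℕ × ℕ × Fin m, zZ m - resZ x - 1 ≠ 0 := fun x => by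
    have h := hres x (-1); intro h0; exact h (by rw [← h0]; push_cast; ring)
  have hf : (∏ c : Fin m, (zZ m - qZ c)) ≠ 0 :=
    Finset.prod_ne_zero_iff.2 fun c _ => shift_ne c _ 0 (by push_cast; ring)
  have hPd : (∏ x ∈ cellF mu N, ((zZ m - resZ x + 1) * (zZ m - resZ x - 1))) ≠ 0 :=
    Finset.prod_ne_zero_iff.2 fun x _ => mul_ne_zero (hresp x) (hresm x)
  have hPA : (∏ x ∈ addF mu N, (zZ m - resZ x)) ≠ 0 :=
    Finset.prod_ne_zero_iff.2 fun x _ => hres0 x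
  -- reindexing the tableau product
  have hstep1 : ∀ F : ℕ × ℕ × Fin m → FZ m,
      ∏ k ∈ Finset.univ.erase (⟨n - 1, by omega⟩ : Fin n), F (T k) =
        ∏ x ∈ cellF mu N, F x := by
    intro F
    refine Finset.prod_nbij T ?_ ?_ ?_ (fun a _ => rfl)
    · intro a ha
      rw [Finset.mem_erase] at ha
      rw [← Finset.mem_coe, cellF_coe mu N hN, hmu]
      refine ⟨hTrange ▸ Set.mem_range_self _, ?_⟩
      simp only [Set.mem_singleton_iff]
      intro he
      exact ha.1 (hTinj (he.trans halpha.symm))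
    · exact fun a _ b _ hab => hTinj hab
    · intro x hx
      rw [Finset.mem_coe, ← Finset.mem_coe, cellF_coe mu N hN, hmu] at hx
      obtain ⟨hx1, hx2⟩ := hx
      rw [← hTrange] at hx1
      obtain ⟨a, rfl⟩ := hx1
      refine ⟨a, ?_, rfl⟩
      rw [Finset.mem_coe, Finset.mem_erase]
      refine ⟨?_, Finset.mem_univ _⟩
      intro he
      exact hx2 (by rw [he, halpha]; exact rfl)
  -- master identity
  have master : (∏ x ∈ cellF mu N, (zZ m - resZ x) ^ 2) *
      (∏ x ∈ addF mu N, (zZ m - resZ x)) =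
      (∏ c : Fin m, (zZ m - qZ c)) * (∏ x ∈ remF mu N, (zZ m - resZ x)) *
        (∏ x ∈ cellF mu N, ((zZ m - resZ x + 1) * (zZ m - resZ x - 1))) := by
    rw [prod_cellF mu N (fun x => (zZ m - resZ x) ^ 2),
      prod_addF mu N (fun x => zZ m - resZ x),
      prod_remF mu N (fun x => zZ m - resZ x),
      prod_cellF mu N (fun x => (zZ m - resZ x + 1) * (zZ m - resZ x - 1)),
      ← Finset.prod_mul_distrib, ← Finset.prod_mul_distrib, ← Finset.prod_mul_distrib]
    refine Finset.prod_congr rfl fun c _ => ?_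
    have hper := percomp (zZ m - qZ c) (fun k => (mu c).part k) N
      (fun t => shift_ne c _ t rfl) (fun k => (mu c).part_succ_le k) (hN c N le_rfl)
    have hD : Dset (mu c) N =
        (Finset.range N).filter (fun k => (mu c).part (k+1) < (mu c).part k) := rfl
    rw [hD]
    have e1 : ∀ k j : ℕ, zZ m - resZ (k+1, j+1, c) = zZ m - qZ c + (k : FZ m) - (j : FZ m) :=
      fun k j => by simp only [resZ]; push_cast; ring
    have e2 : zZ m - resZ (1, (mu c).part 0 + 1, c) =
        zZ m - qZ c - ((mu c).part 0 : FZ m) := by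
      simp only [resZ]; push_cast; ring
    have e3 : ∀ k : ℕ, zZ m - resZ (k+2, (mu c).part (k+1) + 1, c) =
        zZ m - qZ c + ((k+1 : ℕ) : FZ m) - ((mu c).part (k+1) : FZ m) :=
      fun k => by simp only [resZ]; push_cast; ring
    have e4 : ∀ k : ℕ, zZ m - resZ (k+1, (mu c).part k, c) =
        zZ m - qZ c + (k : FZ m) + 1 - ((mu c).part k : FZ m) :=
      fun k => by simp only [resZ]; push_cast; ring
    calc (∏ k ∈ Finset.range N, ∏ j ∈ Finset.range ((mu c).part k),
            (zZ m - resZ (k+1, j+1, c)) ^ 2) *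
          ((zZ m - resZ (1, (mu c).part 0 + 1, c)) *
            ∏ k ∈ (Finset.range N).filter (fun k => (mu c).part (k+1) < (mu c).part k), (zZ m - resZ (k+2, (mu c).part (k+1) + 1, c)))
        = (∏ k ∈ Finset.range N, ∏ j ∈ Finset.range ((mu c).part k),
            (zZ m - qZ c + (k : FZ m) - (j : FZ m)) ^ 2) *
          ((zZ m - qZ c - ((mu c).part 0 : FZ m)) *
            ∏ k ∈ (Finset.range N).filter (fun k => (mu c).part (k+1) < (mu c).part k),
              (zZ m - qZ c + ((k+1 : ℕ) : FZ m) - ((mu c).part (k+1) : FZ m))) := by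
          rw [e2]
          congr 1
          · exact Finset.prod_congr rfl fun k _ => Finset.prod_congr rfl fun j _ => by
              rw [e1]
          · congr 1
            exact Finset.prod_congr rfl fun k _ => e3 k
      _ = (zZ m - qZ c) *
          (∏ k ∈ (Finset.range N).filter (fun k => (mu c).part (k+1) < (mu c).part k), (zZ m - qZ c + (k : FZ m) + 1 - ((mu c).part k : FZ m))) *
          ∏ k ∈ Finset.range N, ∏ j ∈ Finset.range ((mu c).part k),
            ((zZ m - qZ c + (k : FZ m) - (j : FZ m) + 1) *
              (zZ m - qZ c + (k : FZ m) - (j : FZ m) - 1)) := hper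
      _ = (zZ m - qZ c) * (∏ k ∈ (Finset.range N).filter (fun k => (mu c).part (k+1) < (mu c).part k), (zZ m - resZ (k+1, (mu c).part k, c))) *
          ∏ k ∈ Finset.range N, ∏ j ∈ Finset.range ((mu c).part k),
            ((zZ m - resZ (k+1, j+1, c) + 1) * (zZ m - resZ (k+1, j+1, c) - 1)) := by
          congr 1
          · congr 1
            exact Finset.prod_congr rfl fun k _ => (e4 k).symm
          · exact Finset.prod_congr rfl fun k _ => Finset.prod_congr rfl fun j _ => by
              rw [e1]
  -- final assembly
  rw [hstep1 (fun x => (zZ m - resZ x) ^ 2 / ((zZ m - resZ x + 1) * (zZ m - resZ x - 1))),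
    Finset.prod_div_distrib,
    show mu.removable = ↑(remF mu N) from (remF_coe mu N hN).symm,
    show mu.addable = ↑(addF mu N) from (addF_coe mu N hN).symm,
    finprod_mem_coe_finset, finprod_mem_coe_finset, Finset.prod_inv_distrib]
  field_simp
  linear_combination (zZ m - resZ alpha) * master
end

section
/- Let K be a field, n ≥ 3, and let x, y, z ∈ K be pairwise distinct. Then in the group algebra K[S_n], for every i with 1 ≤ i ≤ n−2: t_i(x,y) · t_{i+1}(x,z) · t_i(y,z) = t_{i+1}(y,z) · t_i(x,z) · t_{i+1}(x,y). -/
/-- The Baxterized element `t(x, y) = (x − y)⁻¹·1 + s` in the group algebra `K[S_n]`,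
where `s = Equiv.swap a b` (intended: the simple transposition `(a, a+1)`). -/
noncomputable def bax {K : Type*} [Field K] {n : ℕ} (a b : Fin n) (x y : K) :
    MonoidAlgebra K (Equiv.Perm (Fin n)) :=
  algebraMap K (MonoidAlgebra K (Equiv.Perm (Fin n))) (x - y)⁻¹ +
    MonoidAlgebra.of K (Equiv.Perm (Fin n)) (Equiv.swap a b)


lemma yb_general {K : Type*} [Field K] {G : Type*} [Group G]
    (s u : G) (hs : s * s = 1) (hu : u * u = 1) (hb : s * u * s = u * s * u)
    (a b c : K) (h : a * b + b * c = a * c) :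
    (algebraMap K (MonoidAlgebra K G) a + MonoidAlgebra.of K G s) *
      (algebraMap K (MonoidAlgebra K G) b + MonoidAlgebra.of K G u) *
      (algebraMap K (MonoidAlgebra K G) c + MonoidAlgebra.of K G s) =
    (algebraMap K (MonoidAlgebra K G) c + MonoidAlgebra.of K G u) *
      (algebraMap K (MonoidAlgebra K G) b + MonoidAlgebra.of K G s) *
      (algebraMap K (MonoidAlgebra K G) a + MonoidAlgebra.of K G u) := by
  set S : MonoidAlgebra K G := MonoidAlgebra.of K G s with hS
  set U : MonoidAlgebra K G := MonoidAlgebra.of K G u with hU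
  have hSS : S * S = 1 := by rw [hS, ← map_mul, hs, map_one]
  have hUU : U * U = 1 := by rw [hU, ← map_mul, hu, map_one]
  have hb' : S * (U * S) = U * (S * U) := by
    rw [← mul_assoc, ← mul_assoc, hS, hU, ← map_mul, ← map_mul, ← map_mul, ← map_mul, hb]
  simp only [Algebra.algebraMap_eq_smul_one, add_mul, mul_add, smul_mul_assoc,
    mul_smul_comm, one_mul, mul_one, smul_smul, mul_assoc, hSS, hUU, hb']
  match_scalars
  all_goals first
    | ring1
    | linear_combination h
    | linear_combination -h

/-- `t_i(x,y) t_{i+1}(x,z) t_i(y,z) = t_{i+1}(y,z) t_i(x,z) t_{i+1}(x,y)` in `K[S_n]`,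
where `s_i` is the simple transposition interchanging `i` and `i+1` of `{1, …, n}`
(0-indexed: swap of `i-1` and `i` in `Fin n`). -/
theorem statement7 {K : Type*} [Field K] {n : ℕ} (hn : 3 ≤ n)
    (x y z : K) (hxy : x ≠ y) (hxz : x ≠ z) (hyz : y ≠ z)
    (i : ℕ) (hi1 : 1 ≤ i) (hi2 : i ≤ n - 2) :
    bax (⟨i - 1, by omega⟩ : Fin n) ⟨i, by omega⟩ x y *
        bax (⟨i, by omega⟩ : Fin n) ⟨i + 1, by omega⟩ x z *
        bax (⟨i - 1, by omega⟩ : Fin n) ⟨i, by omega⟩ y z =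
      bax (⟨i, by omega⟩ : Fin n) ⟨i + 1, by omega⟩ y z *
        bax (⟨i - 1, by omega⟩ : Fin n) ⟨i, by omega⟩ x z *
        bax (⟨i, by omega⟩ : Fin n) ⟨i + 1, by omega⟩ x y := by
  set p : Fin n := ⟨i - 1, by omega⟩
  set q : Fin n := ⟨i, by omega⟩
  set r : Fin n := ⟨i + 1, by omega⟩
  have hpq : p ≠ q := by simp only [p, q, ne_eq, Fin.mk.injEq]; omega
  have hqr : q ≠ r := by simp only [q, r, ne_eq, Fin.mk.injEq]; omega
  have hpr : p ≠ r := by simp only [p, r, ne_eq, Fin.mk.injEq]; omega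
  have hs : Equiv.swap p q * Equiv.swap p q = 1 := Equiv.swap_mul_self p q
  have hu : Equiv.swap q r * Equiv.swap q r = 1 := Equiv.swap_mul_self q r
  have hb : Equiv.swap p q * Equiv.swap q r * Equiv.swap p q =
      Equiv.swap q r * Equiv.swap p q * Equiv.swap q r := by
    have h1 : Equiv.swap p q * Equiv.swap q r * (Equiv.swap p q)⁻¹ =
        Equiv.swap ((Equiv.swap p q) q) ((Equiv.swap p q) r) :=
      (Equiv.swap_apply_apply _ _ _).symm
    have h2 : Equiv.swap q r * Equiv.swap p q * (Equiv.swap q r)⁻¹ =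
        Equiv.swap ((Equiv.swap q r) p) ((Equiv.swap q r) q) :=
      (Equiv.swap_apply_apply _ _ _).symm
    rw [Equiv.swap_inv] at h1 h2
    rw [h1, h2, Equiv.swap_apply_right, Equiv.swap_apply_of_ne_of_ne hpr.symm hqr.symm,
      Equiv.swap_apply_of_ne_of_ne hpq hpr, Equiv.swap_apply_left]
  have hscal : (x - y)⁻¹ * (x - z)⁻¹ + (x - z)⁻¹ * (y - z)⁻¹ = (x - y)⁻¹ * (y - z)⁻¹ := by
    have h1 : x - y ≠ 0 := sub_ne_zero.mpr hxy
    have h2 : x - z ≠ 0 := sub_ne_zero.mpr hxz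
    have h3 : y - z ≠ 0 := sub_ne_zero.mpr hyz
    field_simp
    ring
  simp only [bax]
  exact yb_general (Equiv.swap p q) (Equiv.swap q r) hs hu hb _ _ _ hscal
end
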